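/- arXiv:0711.2374 — 2 statements merged into one kernel-verified Lean document; each statement's English description precedes it below -/
import Mathlib

section
/- Let W : ℕ → A be an infinite word over a finite alphabet A. Then there exists a uniformly recurrent infinite word Ŵ : ℕ → A all of whose factors are factors of W, i.e. F(Ŵ) ⊆ F(W). -/
/-- The finite word `u` occurs in the infinite word `W` at position `i`. -/
def occursAt {A : Type*} (W : ℕ → A) (u : List A) (i : ℕ) : Prop :=
  u = (List.range u.length).map (fun j => W (i + j))

/-- `u` is a factor (subword) of the infinite word `W`. -/
def IsFactor {A : Type*} (W : ℕ → A) (u : List A) : Prop :=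
  ∃ i, occursAt W u i

/-- `W` is uniformly recurrent: for every factor `v` there exists `N` such that
every factor of `W` of length `N` contains `v` as a factor. -/
def UniformlyRecurrent {A : Type*} (W : ℕ → A) : Prop :=
  ∀ v, IsFactor W v → ∃ N : ℕ, ∀ u, IsFactor W u → u.length = N → v <:+: u

lemma occursAt_iff {A : Type*} {W : ℕ → A} {u : List A} {i : ℕ} :
    occursAt W u i ↔ ∀ j (h : j < u.length), u[j] = W (i + j) := by
  constructor
  · intro h j hj
    have := List.getElem_of_eq h (i := j) hj
    simpa using this
  · intro h
    apply List.ext_getElem (by simp)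
    intro j h1 h2
    simp [h j h1]

lemma IsFactor.of_infix {A : Type*} {W : ℕ → A} {u v : List A}
    (hu : IsFactor W u) (hvu : v <:+: u) : IsFactor W v := by
  obtain ⟨i, hi⟩ := hu
  obtain ⟨s, t, rfl⟩ := hvu
  refine ⟨i + s.length, occursAt_iff.2 ?_⟩
  intro j hj
  have hlen : s.length + j < (s ++ v ++ t).length := by
    simp [List.length_append]; omega
  have := occursAt_iff.1 hi (s.length + j) hlen
  rw [List.getElem_append_left (show s.length + j < (s ++ v).length by simp; omega)] at this
  rw [List.getElem_append_right (by omega)] at this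
  simp only [Nat.add_sub_cancel_left] at this
  rw [this]
  ring_nf

/-- Every infinite word over a finite alphabet contains (in the sense of factor
inclusion) a uniformly recurrent infinite word. -/
theorem exists_uniformlyRecurrent_subword {A : Type*} [Fintype A] (W : ℕ → A) :
    ∃ What : ℕ → A, UniformlyRecurrent What ∧
      ∀ u, IsFactor What u → IsFactor W u := by
  classical
  have hA : Nonempty A := ⟨W 0⟩
  -- the collection of "good" languages
  set S : Set (Set (List A)) :=
    {L | L.Nonempty ∧ (∀ u ∈ L, ∀ v, v <:+: u → v ∈ L) ∧
      (∀ u ∈ L, ∃ a, u ++ [a] ∈ L) ∧ ∀ u ∈ L, IsFactor W u} with hS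
  have hFW : {u | IsFactor W u} ∈ S := by
    refine ⟨⟨[], ⟨0, by simp [occursAt]⟩⟩, fun u hu v hv => hu.of_infix hv, ?_, fun u hu => hu⟩
    rintro u ⟨i, hi⟩
    refine ⟨W (i + u.length), ⟨i, occursAt_iff.2 ?_⟩⟩
    intro j hj
    simp only [List.length_append, List.length_singleton] at hj
    rcases Nat.lt_or_ge j u.length with h | h
    · rw [List.getElem_append_left h]
      exact occursAt_iff.1 hi j h
    · have hj' : j = u.length := by omega
      subst hj'
      simp
  have hchainlb : ∀ c ⊆ S, IsChain (· ⊆ ·) c → c.Nonempty →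
      ∃ lb ∈ S, ∀ s ∈ c, lb ⊆ s := by
    intro c hcS hchain hcne
    refine ⟨⋂₀ c, ?_, fun s hs => Set.sInter_subset_of_mem hs⟩
    obtain ⟨L₀, hL₀⟩ := hcne
    have hnil : ∀ L ∈ c, ([] : List A) ∈ L := by
      intro L hL
      obtain ⟨⟨u, hu⟩, hfac, -, -⟩ := hcS hL
      exact hfac u hu [] List.nil_infix
    refine ⟨⟨[], fun L hL => hnil L hL⟩, ?_, ?_, ?_⟩
    · intro u hu v hv L hL
      exact (hcS hL).2.1 u (hu L hL) v hv
    · intro u hu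
      by_contra hcon
      push_neg at hcon
      have hbad : ∀ a : A, ∃ L ∈ c, u ++ [a] ∉ L := by
        intro a
        by_contra h
        push_neg at h
        exact hcon a (fun L hL => h L hL)
      choose g hgc hgn using hbad
      -- the finite image of g, as a subset of the chain, has a minimal element
      obtain ⟨L₁, hL₁, hL₁min⟩ := Set.Finite.exists_minimalFor id (g '' Set.univ)
        ((Set.finite_univ).image g) ⟨g (Classical.arbitrary A), ⟨_, trivial, rfl⟩⟩
      obtain ⟨a₁, -, rfl⟩ := hL₁
      have hle : ∀ a : A, g a₁ ⊆ g a := by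
        intro a
        rcases eq_or_ne (g a₁) (g a) with h | h
        · exact h.le
        · rcases hchain (hgc a₁) (hgc a) h with h' | h'
          · exact h'
          · simpa using hL₁min ⟨a, trivial, rfl⟩ h'
      obtain ⟨a, ha⟩ := (hcS (hgc a₁)).2.2.1 u (hu _ (hgc a₁))
      exact hgn a (hle a ha)
    · intro u hu
      exact (hcS hL₀).2.2.2 u (hu L₀ hL₀)
  obtain ⟨L, -, ⟨hLne, hLfac, hLext, hLfw⟩, hmin⟩ := zorn_superset_nonempty S hchainlb _ hFW
  -- build the word What by repeated right extension inside L
  choose f hf using hLext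
  have h0 : ([] : List A) ∈ L := by
    obtain ⟨u, hu⟩ := hLne
    exact hLfac u hu [] List.nil_infix
  let p : ℕ → {l : List A // l ∈ L} := fun n =>
    Nat.rec ⟨[], h0⟩ (fun _ q => ⟨q.1 ++ [f q.1 q.2], hf q.1 q.2⟩) n
  have hplen : ∀ n, (p n).1.length = n := by
    intro n
    induction n with
    | zero => rfl
    | succ n ih => show ((p n).1 ++ _).length = n + 1; simp [ih]
  set What : ℕ → A := fun n => (p (n + 1)).1.getD n (W 0) with hWhat
  have hpW : ∀ n, (p n).1 = (List.range n).map What := by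
    intro n
    induction n with
    | zero => rfl
    | succ n ih =>
      have hWn : What n = f (p n).1 (p n).2 := by
        have h1 : What n = ((p n).1 ++ [f (p n).1 (p n).2]).getD n (W 0) := rfl
        rw [h1, List.getD_eq_getElem _ _ (by simp [hplen]),
          List.getElem_append_right (by simp [hplen])]
        simp [hplen]
      show (p n).1 ++ [f (p n).1 (p n).2] = _
      rw [List.range_succ, List.map_append, ← ih]
      simp [hWn]
  have hfactor : ∀ u, IsFactor What u → u ∈ L := by
    rintro u ⟨i, hi⟩
    have hinf : u <:+: (p (i + u.length)).1 := by
      rw [hpW, List.range_add, List.map_append, List.map_map]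
      refine ⟨(List.range i).map What, [], ?_⟩
      rw [List.append_nil]
      congr 1
    exact hLfac _ (p _).2 u hinf
  refine ⟨What, ?_, fun u hu => hLfw u (hfactor u hu)⟩
  intro v hv
  by_contra hcon
  push_neg at hcon
  have hvL : v ∈ L := hfactor v hv
  set Q : List A → ℕ → Prop := fun w n =>
    ∃ u ∈ L, ¬ v <:+: u ∧ ∃ s t, u = s ++ w ++ t ∧ n ≤ t.length with hQ
  have hQmono : ∀ w m n, m ≤ n → Q w n → Q w m := by
    rintro w m n hmn ⟨u, hu, hv, s, t, rfl, ht⟩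
    exact ⟨_, hu, hv, s, t, rfl, le_trans hmn ht⟩
  set M : Set (List A) := {w | ∀ n, Q w n} with hM
  have hML : M ⊆ L := by
    intro w hw
    obtain ⟨u, hu, -, s, t, rfl, -⟩ := hw 0
    exact hLfac _ hu w ⟨s, t, rfl⟩
  have hMS : M ∈ S := by
    refine ⟨⟨[], ?_⟩, ?_, ?_, fun u hu => hLfw u (hML hu)⟩
    · intro n
      obtain ⟨u, hfu, hlen, hnv⟩ := hcon n
      exact ⟨u, hfactor u hfu, hnv, [], u, by simp, by omega⟩
    · rintro w hw w' ⟨s', t', rfl⟩ n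
      obtain ⟨u, hu, hnv, s, t, rfl, ht⟩ := hw n
      exact ⟨_, hu, hnv, s ++ s', t' ++ t, by simp, by simp; omega⟩
    · intro w hw
      by_contra hcon2
      push_neg at hcon2
      have : ∀ a : A, ∃ n, ¬ Q (w ++ [a]) n := by
        intro a
        by_contra h
        push_neg at h
        exact hcon2 a h
      choose g hg using this
      set n₀ : ℕ := Finset.univ.sup g with hn₀
      obtain ⟨u, hu, hnv, s, t, hust, ht⟩ := hw (n₀ + 1)
      obtain ⟨a, t', rfl⟩ : ∃ a t', t = a :: t' := by
        cases t with
        | nil => simp at ht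
        | cons a t' => exact ⟨a, t', rfl⟩
      refine hg a ⟨u, hu, hnv, s, t', ?_, ?_⟩
      · rw [hust]; simp
      · have : g a ≤ n₀ := Finset.le_sup (Finset.mem_univ a)
        simp at ht; omega
  have hMeq : M = L := le_antisymm hML (hmin hMS hML)
  obtain ⟨u, -, hnv, s, t, rfl, -⟩ := (hMeq ▸ hvL : v ∈ M) 0
  exact hnv ⟨s, t, rfl⟩
end

section
/- Let T : [0,1] → [0,1] be a piecewise-continuous interval transformation: there are partitions 0 = x₀ < x₁ < … < x_n = 1 and 0 = y₀ < y₁ < … < y_n = 1 and a permutation σ of {1, …, n} such that T maps each open interval (x_{i−1}, x_i) continuously, bijectively and monotonically onto (y_{σ(i)−1}, y_{σ(i)}). Let W : ℕ → {1, …, n} be a uniformly recurrent word which is the evolution of a point x₀* whose orbit avoids all partition points, i.e. W(m) = i iff T^m(x₀*) ∈ (x_{i−1}, x_i). Then there exists an infinite word W' equivalent to W (F(W') = F(W)) which is generated by an interval exchange transformation: there exist an interval exchange transformation S of [0,1) (a bijection that is an isometry on each interval of a finite partition of [0,1) into half-open intervals), characteristic sets V₁, …, V_n partitioning [0,1), each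 a finite union of intervals, and a point y ∈ [0,1) such that W'(m) = i iff S^m(y) ∈ V_i for all m ≥ 0. -/
/-- The set of factors of `W`. -/
def Factors {A : Type*} (W : ℕ → A) : Set (List A) :=
  {u | IsFactor W u}

open Filter Set

noncomputable def UU : Ultrafilter ℕ := Ultrafilter.of atTop

lemma UU_le_atTop : (UU : Filter ℕ) ≤ atTop := Ultrafilter.of_le _

open Classical in
noncomputable def ulim (f : ℕ → ℝ) : ℝ :=
  if h : ∃ L : ℝ, Tendsto f (UU : Filter ℕ) (nhds L) then h.choose else 0

lemma tendsto_ulim {f : ℕ → ℝ} {a b : ℝ} (hf : ∀ N, f N ∈ Icc a b) :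
    Tendsto f (UU : Filter ℕ) (nhds (ulim f)) := by
  have hle : (UU.map f : Filter ℝ) ≤ 𝓟 (Icc a b) := by
    rw [le_principal_iff]
    exact Filter.mem_map.2 (UU.toFilter.univ_mem' (fun N => hf N))
  obtain ⟨L, _, hL2⟩ := (isCompact_Icc (a := a) (b := b)).ultrafilter_le_nhds (UU.map f) hle
  have hex : ∃ L : ℝ, Tendsto f (UU : Filter ℕ) (nhds L) := ⟨L, hL2⟩
  unfold ulim
  rw [dif_pos hex]
  exact hex.choose_spec

lemma ulim_eq {f : ℕ → ℝ} {a b L : ℝ} (hf : ∀ N, f N ∈ Icc a b)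
    (h : Tendsto f (UU : Filter ℕ) (nhds L)) : ulim f = L :=
  tendsto_nhds_unique (tendsto_ulim hf) h

lemma ulim_const (c : ℝ) : ulim (fun _ => c) = c :=
  ulim_eq (a := c) (b := c) (fun _ => ⟨le_refl c, le_refl c⟩) tendsto_const_nhds

lemma ulim_le {f g : ℕ → ℝ} {a b a' b' : ℝ} (hf : ∀ N, f N ∈ Icc a b) (hg : ∀ N, g N ∈ Icc a' b')
    (h : ∀ N, f N ≤ g N) : ulim f ≤ ulim g :=
  le_of_tendsto_of_tendsto' (tendsto_ulim hf) (tendsto_ulim hg) h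

lemma ulim_mem_Icc {f : ℕ → ℝ} {a b : ℝ} (hf : ∀ N, f N ∈ Icc a b) : ulim f ∈ Icc a b :=
  ⟨le_of_tendsto_of_tendsto' tendsto_const_nhds (tendsto_ulim hf) (fun N => (hf N).1),
   le_of_tendsto_of_tendsto' (tendsto_ulim hf) tendsto_const_nhds (fun N => (hf N).2)⟩

lemma ulim_add {f g : ℕ → ℝ} {a b a' b' : ℝ} (hf : ∀ N, f N ∈ Icc a b) (hg : ∀ N, g N ∈ Icc a' b') :
    ulim (fun N => f N + g N) = ulim f + ulim g :=
  ulim_eq (a := a + a') (b := b + b')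
    (fun N => ⟨add_le_add (hf N).1 (hg N).1, add_le_add (hf N).2 (hg N).2⟩)
    ((tendsto_ulim hf).add (tendsto_ulim hg))

lemma ulim_eq_of_le_div {f g : ℕ → ℝ} {a b a' b' C : ℝ}
    (hf : ∀ N, f N ∈ Icc a b) (hg : ∀ N, g N ∈ Icc a' b')
    (h : ∀ N : ℕ, 1 ≤ N → |f N - g N| ≤ C / N) : ulim f = ulim g := by
  have h0 : Tendsto (fun N => f N - g N) atTop (nhds 0) := by
    apply squeeze_zero_norm' _ (tendsto_const_div_atTop_nhds_zero_nat C)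
    filter_upwards [eventually_ge_atTop 1] with N hN
    exact h N hN
  have h1 : Tendsto (fun N => g N + (f N - g N)) (UU : Filter ℕ) (nhds (ulim g + 0)) :=
    (tendsto_ulim hg).add (h0.mono_left UU_le_atTop)
  have h2 : Tendsto f (UU : Filter ℕ) (nhds (ulim g)) := by
    simpa using h1
  exact ulim_eq hf h2

section Freq

variable (o : ℕ → ℝ)

open Classical in
noncomputable def cntR (s : Set ℝ) (N : ℕ) : ℝ :=
  ∑ m ∈ Finset.range N, if o m ∈ s then (1:ℝ) else 0

noncomputable def freq (s : Set ℝ) : ℝ := ulim fun N => cntR o s N / N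

variable {o}

lemma cntR_nonneg (s : Set ℝ) (N : ℕ) : 0 ≤ cntR o s N := by
  classical
  exact Finset.sum_nonneg (fun m _ => by split <;> norm_num)

lemma cntR_le (s : Set ℝ) (N : ℕ) : cntR o s N ≤ N := by
  classical
  calc cntR o s N ≤ ∑ m ∈ Finset.range N, (1:ℝ) :=
        Finset.sum_le_sum (fun m _ => by split <;> norm_num)
    _ = N := by simp

lemma cntR_div_mem (s : Set ℝ) (N : ℕ) : cntR o s N / N ∈ Icc (0:ℝ) 1 := by
  rcases Nat.eq_zero_or_pos N with h | h
  · subst h; simp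
  · have hN : (0:ℝ) < N := by exact_mod_cast h
    constructor
    · exact div_nonneg (cntR_nonneg s N) hN.le
    · rw [div_le_one hN]; exact cntR_le s N

lemma freq_mem_Icc (s : Set ℝ) : freq o s ∈ Icc (0:ℝ) 1 :=
  ulim_mem_Icc (fun N => cntR_div_mem s N)

lemma freq_mono {s s' : Set ℝ} (h : ∀ m, o m ∈ s → o m ∈ s') : freq o s ≤ freq o s' := by
  apply ulim_le (fun N => cntR_div_mem s N) (fun N => cntR_div_mem s' N)
  intro N
  rcases Nat.eq_zero_or_pos N with hN | hN
  · subst hN; simp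
  · have hN' : (0:ℝ) < N := by exact_mod_cast hN
    gcongr
    classical
    exact Finset.sum_le_sum (fun m _ => by
      by_cases hm : o m ∈ s
      · rw [if_pos hm, if_pos (h m hm)]
      · rw [if_neg hm]; split <;> norm_num)


lemma cntR_congr1 {s s' : Set ℝ} (h : ∀ m, 1 ≤ m → (o m ∈ s ↔ o m ∈ s')) (N : ℕ) :
    |cntR o s N - cntR o s' N| ≤ 1 := by
  classical
  have : cntR o s N - cntR o s' N =
      ∑ m ∈ Finset.range N, ((if o m ∈ s then (1:ℝ) else 0) - (if o m ∈ s' then (1:ℝ) else 0)) := by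
    rw [cntR, cntR, Finset.sum_sub_distrib]
  rw [this]
  rcases Nat.eq_zero_or_pos N with hN | hN
  · subst hN; simp
  · rw [Finset.sum_eq_single 0]
    · split <;> split <;> norm_num
    · intro m _ hm
      have h1 : 1 ≤ m := Nat.one_le_iff_ne_zero.2 hm
      by_cases hm2 : o m ∈ s
      · rw [if_pos hm2, if_pos ((h m h1).1 hm2)]; norm_num
      · rw [if_neg hm2, if_neg (fun hc => hm2 ((h m h1).2 hc))]; norm_num
    · intro hc; exact absurd (Finset.mem_range.2 hN) hc

lemma freq_congr1 {s s' : Set ℝ} (h : ∀ m, 1 ≤ m → (o m ∈ s ↔ o m ∈ s')) :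
    freq o s = freq o s' := by
  apply ulim_eq_of_le_div (C := 1) (fun N => cntR_div_mem s N) (fun N => cntR_div_mem s' N)
  intro N hN
  have hN' : (0:ℝ) < N := by exact_mod_cast hN
  rw [div_sub_div_same, abs_div, abs_of_pos hN', div_le_div_iff_of_pos_right hN']
  exact cntR_congr1 h N

lemma freq_congr {s s' : Set ℝ} (h : ∀ m, o m ∈ s ↔ o m ∈ s') : freq o s = freq o s' :=
  freq_congr1 (fun m _ => h m)

lemma freq_add {s s' s'' : Set ℝ} (hdis : ∀ m, ¬(o m ∈ s ∧ o m ∈ s'))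
    (hcup : ∀ m, o m ∈ s'' ↔ o m ∈ s ∨ o m ∈ s') :
    freq o s'' = freq o s + freq o s' := by
  have hpt : ∀ N, cntR o s'' N / N = cntR o s N / N + cntR o s' N / N := by
    intro N
    rw [← add_div]
    congr 1
    classical
    rw [cntR, cntR, cntR, ← Finset.sum_add_distrib]
    apply Finset.sum_congr rfl
    intro m _
    by_cases h1 : o m ∈ s
    · rw [if_pos h1, if_pos ((hcup m).2 (Or.inl h1)), if_neg (fun h2 => hdis m ⟨h1, h2⟩)]
      norm_num
    · by_cases h2 : o m ∈ s'
      · rw [if_neg h1, if_pos h2, if_pos ((hcup m).2 (Or.inr h2))]; norm_num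
      · rw [if_neg h1, if_neg h2, if_neg (fun hc => (hcup m).1 hc |>.elim h1 h2)]; norm_num
  calc freq o s'' = ulim (fun N => cntR o s N / N + cntR o s' N / N) := by
        rw [freq]; exact congrArg _ (funext hpt)
    _ = freq o s + freq o s' :=
        ulim_add (fun N => cntR_div_mem s N) (fun N => cntR_div_mem s' N)

lemma freq_shift {s s' : Set ℝ} (h : ∀ m, o (m+1) ∈ s ↔ o m ∈ s') :
    freq o s = freq o s' := by
  classical
  have key : ∀ N : ℕ, cntR o s (N+1) = cntR o s' N + (if o 0 ∈ s then (1:ℝ) else 0) := by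
    intro N
    rw [cntR, Finset.sum_range_succ']
    congr 1
    apply Finset.sum_congr rfl
    intro m _
    by_cases hm : o m ∈ s'
    · rw [if_pos ((h m).2 hm), if_pos hm]
    · rw [if_neg (fun hc => hm ((h m).1 hc)), if_neg hm]
  apply ulim_eq_of_le_div (C := 1) (fun N => cntR_div_mem s N) (fun N => cntR_div_mem s' N)
  intro N hN
  have hN' : (0:ℝ) < N := by exact_mod_cast hN
  rw [div_sub_div_same, abs_div, abs_of_pos hN', div_le_div_iff_of_pos_right hN']
  have h2 : cntR o s (N+1) = cntR o s N + (if o N ∈ s then (1:ℝ) else 0) := by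
    rw [cntR, cntR, Finset.sum_range_succ]
  have := key N
  rw [h2] at this
  have hb1 : (0:ℝ) ≤ (if o N ∈ s then (1:ℝ) else 0) := by split <;> norm_num
  have hb2 : (if o N ∈ s then (1:ℝ) else 0) ≤ 1 := by split <;> norm_num
  have hb3 : (0:ℝ) ≤ (if o 0 ∈ s then (1:ℝ) else 0) := by split <;> norm_num
  have hb4 : (if o 0 ∈ s then (1:ℝ) else 0) ≤ 1 := by split <;> norm_num
  rw [abs_le]; constructor <;> linarith

lemma freq_zero_of {s : Set ℝ} (h : ∀ m, 1 ≤ m → o m ∉ s) : freq o s = 0 := by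
  have h1 : freq o s = freq o (∅ : Set ℝ) :=
    freq_congr1 (fun m hm => ⟨fun hc => absurd hc (h m hm), fun hc => hc.elim⟩)
  rw [h1, freq]
  have : ∀ N, cntR o (∅ : Set ℝ) N / N = 0 := by
    intro N
    classical
    rw [cntR]
    simp
  rw [funext this]
  exact ulim_const 0

lemma freq_univ_of {s : Set ℝ} (h : ∀ m, o m ∈ s) : freq o s = 1 := by
  apply ulim_eq (fun N => cntR_div_mem s N)
  have : ∀ N : ℕ, 1 ≤ N → cntR o s N / N = 1 := by
    intro N hN
    have hN' : (0:ℝ) < N := by exact_mod_cast hN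
    classical
    rw [cntR]
    rw [Finset.sum_congr rfl (fun m _ => if_pos (h m))]
    simp [Finset.sum_const, hN'.ne']
  apply Tendsto.mono_left _ UU_le_atTop
  apply Tendsto.congr' _ tendsto_const_nhds
  filter_upwards [eventually_ge_atTop 1] with N hN
  exact (this N hN).symm

lemma freq_Iio_split {a b : ℝ} (hab : a < b) :
    freq o (Iio b) = freq o (Iic a) + freq o (Ioo a b) := by
  apply freq_add
  · intro m ⟨h1, h2⟩; exact absurd h1 (not_le.2 h2.1)
  · intro m
    constructor
    · intro hm
      rcases le_or_gt (o m) a with h | h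
      · exact Or.inl h
      · exact Or.inr ⟨h, hm⟩
    · rintro (h | h)
      · exact lt_of_le_of_lt h hab
      · exact h.2

lemma freq_Iio_split' {a b : ℝ} (hab : a ≤ b) :
    freq o (Iio b) = freq o (Iio a) + freq o (Ico a b) := by
  apply freq_add
  · intro m ⟨h1, h2⟩; exact absurd h2.1 (not_le.2 h1)
  · intro m
    constructor
    · intro hm
      rcases lt_or_ge (o m) a with h | h
      · exact Or.inl h
      · exact Or.inr ⟨h, hm⟩
    · rintro (h | h)
      · exact lt_of_lt_of_le h hab
      · exact h.2

lemma freq_Iic_split {a b : ℝ} (hab : a ≤ b) :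
    freq o (Iic b) = freq o (Iic a) + freq o (Ioc a b) := by
  apply freq_add
  · intro m ⟨h1, h2⟩; exact absurd h1 (not_le.2 h2.1)
  · intro m
    constructor
    · intro hm
      rcases le_or_gt (o m) a with h | h
      · exact Or.inl h
      · exact Or.inr ⟨h, hm⟩
    · rintro (h | h)
      · exact le_trans h hab
      · exact h.2

end Freq

lemma Fin.succ_le_castSucc' {n : ℕ} {i j : Fin n} (h : i < j) :
    (i.succ : Fin (n+1)) ≤ j.castSucc := by
  rw [Fin.le_def]
  rw [Fin.lt_def] at h
  simp only [Fin.val_succ, Fin.coe_castSucc]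
  omega

section Dyn

variable {n : ℕ} (x y : Fin (n+1) → ℝ) (σ : Equiv.Perm (Fin n)) (T : ℝ → ℝ) (p : ℝ)
  (W : ℕ → Fin n)

noncomputable def orb : ℕ → ℝ := fun m => T^[m] p

lemma orb_succ (m : ℕ) : orb T p (m+1) = T (orb T p m) := Function.iterate_succ_apply' T m p

variable {x y σ T p W}

lemma branch_unique (hx : StrictMono x) {z : ℝ} {i j : Fin n}
    (hz : z ∈ Ioo (x j.castSucc) (x j.succ)) (h1 : x i.castSucc ≤ z) (h2 : z ≤ x i.succ) :
    j = i := by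
  rcases lt_trichotomy j i with h | h | h
  · have := hx.monotone (Fin.succ_le_castSucc' h)
    exact absurd hz.2 (by push_neg; linarith)
  · exact h
  · have := hx.monotone (Fin.succ_le_castSucc' h)
    exact absurd hz.1 (by push_neg; linarith)

section withHyp

variable (hx : StrictMono x) (hy : StrictMono y)
  (hT : ∀ i : Fin n,
      Set.BijOn T (Set.Ioo (x i.castSucc) (x i.succ))
        (Set.Ioo (y (σ i).castSucc) (y (σ i).succ)) ∧
      ContinuousOn T (Set.Ioo (x i.castSucc) (x i.succ)) ∧
      (StrictMonoOn T (Set.Ioo (x i.castSucc) (x i.succ)) ∨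
       StrictAntiOn T (Set.Ioo (x i.castSucc) (x i.succ))))
  (hW : ∀ (m : ℕ) (i : Fin n),
      W m = i ↔ T^[m] p ∈ Set.Ioo (x i.castSucc) (x i.succ))

include hW in
lemma orb_mem_branch (m : ℕ) : orb T p m ∈ Ioo (x (W m).castSucc) (x (W m).succ) :=
  (hW m (W m)).1 rfl

include hW hx in
lemma orb_ne_x (m : ℕ) (j : Fin (n+1)) : orb T p m ≠ x j := by
  intro hc
  have hm := orb_mem_branch hW m
  rw [hc] at hm
  rcases le_or_gt j (W m).castSucc with h | h
  · exact absurd hm.1 (not_lt.2 (hx.monotone h))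
  · have : (W m).succ ≤ j := by
      rw [Fin.le_def]; rw [Fin.lt_def] at h
      simp only [Fin.val_succ, Fin.coe_castSucc] at *
      omega
    exact absurd hm.2 (not_lt.2 (hx.monotone this))

include hW hT in
lemma orb_succ_mem (m : ℕ) :
    orb T p (m+1) ∈ Ioo (y (σ (W m)).castSucc) (y (σ (W m)).succ) := by
  rw [orb_succ]
  exact (hT (W m)).1.mapsTo (orb_mem_branch hW m)

include hW hT hy in
lemma orb_ne_y (m : ℕ) (hm : 1 ≤ m) (j : Fin (n+1)) : orb T p m ≠ y j := by
  match m, hm with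
  | (m' + 1), _ => ?_
  intro hc
  have hmem := orb_succ_mem hT hW m'
  rw [hc] at hmem
  rcases le_or_gt j (σ (W m')).castSucc with h | h
  · exact absurd hmem.1 (not_lt.2 (hy.monotone h))
  · have : (σ (W m')).succ ≤ j := by
      rw [Fin.le_def]; rw [Fin.lt_def] at h
      simp only [Fin.val_succ, Fin.coe_castSucc] at *
      omega
    exact absurd hmem.2 (not_lt.2 (hy.monotone this))

include hx hW in
lemma W_eq_of_window {i : Fin n} (m : ℕ) (h1 : x i.castSucc ≤ orb T p m)
    (h2 : orb T p m ≤ x i.succ) : W m = i :=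
  branch_unique hx (orb_mem_branch hW m) h1 h2

include hy hT hW in
lemma W_eq_of_ywindow {i : Fin n} (m : ℕ) (h1 : y (σ i).castSucc ≤ orb T p (m+1))
    (h2 : orb T p (m+1) ≤ y (σ i).succ) : W m = i :=
  σ.injective (branch_unique hy (orb_succ_mem hT hW m) h1 h2)

variable (T p) in
noncomputable def Gf (t : ℝ) : ℝ := freq (orb T p) (Iio t)

variable (T p) in
noncomputable def Hf (t : ℝ) : ℝ := freq (orb T p) (Iic t)

lemma Gf_mono {t t' : ℝ} (h : t ≤ t') : Gf T p t ≤ Gf T p t' :=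
  freq_mono (fun m hm => lt_of_lt_of_le hm h)

lemma Hf_mono {t t' : ℝ} (h : t ≤ t') : Hf T p t ≤ Hf T p t' :=
  freq_mono (fun m hm => le_trans hm h)

lemma Gf_le_Hf (t : ℝ) : Gf T p t ≤ Hf T p t :=
  freq_mono (fun m hm => Set.mem_Iic.2 (le_of_lt hm))

lemma Gf_mem (t : ℝ) : Gf T p t ∈ Icc (0:ℝ) 1 := freq_mem_Icc _
lemma Hf_mem (t : ℝ) : Hf T p t ∈ Icc (0:ℝ) 1 := freq_mem_Icc _

include hx hW in
lemma GH_x (j : Fin (n+1)) : Gf T p (x j) = Hf T p (x j) :=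
  freq_congr (fun m => ⟨fun h => Set.mem_Iic.2 (le_of_lt h),
    fun h => lt_of_le_of_ne h (orb_ne_x hx hW m j)⟩)

include hy hT hW in
lemma GH_y (j : Fin (n+1)) : Gf T p (y j) = Hf T p (y j) :=
  freq_congr1 (fun m hm => ⟨fun h => Set.mem_Iic.2 (le_of_lt h),
    fun h => lt_of_le_of_ne h (orb_ne_y hy hT hW m hm j)⟩)

include hx hW in
lemma Gf_x_zero : Gf T p (x 0) = 0 := by
  apply freq_zero_of
  intro m _ hc
  have hb := orb_mem_branch hW m
  have : x 0 ≤ x (W m).castSucc := hx.monotone (Fin.zero_le _)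
  exact absurd hc (not_lt.2 (le_trans this hb.1.le))

include hx hW in
lemma Gf_x_last : Gf T p (x (Fin.last n)) = 1 := by
  apply freq_univ_of
  intro m
  have hb := orb_mem_branch hW m
  have : x (W m).succ ≤ x (Fin.last n) := hx.monotone (Fin.le_last _)
  exact lt_of_lt_of_le hb.2 this

include hy hT hW in
lemma Hf_y_zero : Hf T p (y 0) = 0 := by
  apply freq_zero_of
  intro m hm hc
  have hb := orb_succ_mem hT hW (m-1)
  rw [Nat.sub_add_cancel hm] at hb
  have : y 0 ≤ y (σ (W (m-1))).castSucc := hy.monotone (Fin.zero_le _)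
  exact absurd hc (not_le.2 (lt_of_le_of_lt this hb.1))

include hy hT hW in
lemma Hf_y_last (hy1 : y (Fin.last n) = 1) (hp1 : p ≤ 1) : Hf T p (y (Fin.last n)) = 1 := by
  apply freq_univ_of
  intro m
  match m with
  | 0 => rw [hy1]; exact hp1
  | (m' + 1) =>
    have hb := orb_succ_mem hT hW m'
    have : y (σ (W m')).succ ≤ y (Fin.last n) := hy.monotone (Fin.le_last _)
    exact le_of_lt (lt_of_lt_of_le hb.2 this)

include hx hy hT hW in
lemma meas_branch (i : Fin n) :
    Gf T p (x i.succ) - Gf T p (x i.castSucc) =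
      Hf T p (y (σ i).succ) - Hf T p (y (σ i).castSucc) := by
  have hxc : x i.castSucc ≤ x i.succ := (hx ((Fin.castSucc_lt_succ (i := i)))).le
  have hyc : y (σ i).castSucc ≤ y (σ i).succ := (hy ((Fin.castSucc_lt_succ (i := σ i)))).le
  have e1 : Gf T p (x i.succ) = Gf T p (x i.castSucc) +
      freq (orb T p) (Ico (x i.castSucc) (x i.succ)) := freq_Iio_split' hxc
  have e2 : freq (orb T p) (Ico (x i.castSucc) (x i.succ)) =
      freq (orb T p) (Ioo (x i.castSucc) (x i.succ)) :=
    freq_congr (fun m => ⟨fun h => ⟨lt_of_le_of_ne h.1 (orb_ne_x hx hW m _).symm, h.2⟩,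
      fun h => ⟨h.1.le, h.2⟩⟩)
  have e3 : Hf T p (y (σ i).succ) = Hf T p (y (σ i).castSucc) +
      freq (orb T p) (Ioc (y (σ i).castSucc) (y (σ i).succ)) := freq_Iic_split hyc
  have e4 : freq (orb T p) (Ioc (y (σ i).castSucc) (y (σ i).succ)) =
      freq (orb T p) (Ioo (y (σ i).castSucc) (y (σ i).succ)) :=
    freq_congr1 (fun m hm => ⟨fun h => ⟨h.1, lt_of_le_of_ne h.2 (orb_ne_y hy hT hW m hm _)⟩,
      fun h => ⟨h.1, h.2.le⟩⟩)
  have e5 : freq (orb T p) (Ioo (y (σ i).castSucc) (y (σ i).succ)) =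
      freq (orb T p) (Ioo (x i.castSucc) (x i.succ)) := by
    apply freq_shift
    intro m
    constructor
    · intro hm
      have : W m = i := W_eq_of_ywindow hy hT hW m hm.1.le hm.2.le
      rw [← this]
      exact orb_mem_branch hW m
    · intro hm
      have : W m = i := (hW m i).2 hm
      rw [← this]
      exact orb_succ_mem hT hW m
  linarith

include hx hy hT hW in
lemma ident_mono_G {i : Fin n} (hm : StrictMonoOn T (Ioo (x i.castSucc) (x i.succ)))
    {w : ℝ} (hw : w ∈ Ioo (x i.castSucc) (x i.succ)) :
    Gf T p (T w) = Gf T p w + (Hf T p (y (σ i).castSucc) - Gf T p (x i.castSucc)) := by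
  have hTw : T w ∈ Ioo (y (σ i).castSucc) (y (σ i).succ) := (hT i).1.mapsTo hw
  have e1 : Gf T p (T w) = Hf T p (y (σ i).castSucc) +
      freq (orb T p) (Ioo (y (σ i).castSucc) (T w)) := freq_Iio_split hTw.1
  have e2 : Gf T p w = Gf T p (x i.castSucc) +
      freq (orb T p) (Ico (x i.castSucc) w) := freq_Iio_split' hw.1.le
  have e3 : freq (orb T p) (Ico (x i.castSucc) w) =
      freq (orb T p) (Ioo (x i.castSucc) w) :=
    freq_congr (fun m => ⟨fun h => ⟨lt_of_le_of_ne h.1 (orb_ne_x hx hW m _).symm, h.2⟩,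
      fun h => ⟨h.1.le, h.2⟩⟩)
  have e4 : freq (orb T p) (Ioo (y (σ i).castSucc) (T w)) =
      freq (orb T p) (Ioo (x i.castSucc) w) := by
    apply freq_shift
    intro m
    constructor
    · intro hmem
      have hWm : W m = i :=
        W_eq_of_ywindow hy hT hW m hmem.1.le (hmem.2.le.trans hTw.2.le)
      have hb : orb T p m ∈ Ioo (x i.castSucc) (x i.succ) := by
        rw [← hWm]; exact orb_mem_branch hW m
      refine ⟨hb.1, ?_⟩
      have := (hm.lt_iff_lt hb hw).1 (by rw [← orb_succ T p _]; exact hmem.2)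
      exact this
    · intro hmem
      have hWm : W m = i := W_eq_of_window hx hW m hmem.1.le (hmem.2.trans hw.2).le
      have hb : orb T p m ∈ Ioo (x i.castSucc) (x i.succ) := by
        rw [← hWm]; exact orb_mem_branch hW m
      have hy' : orb T p (m+1) ∈ Ioo (y (σ i).castSucc) (y (σ i).succ) := by
        rw [← hWm]; exact orb_succ_mem hT hW m
      refine ⟨hy'.1, ?_⟩
      rw [orb_succ T p _]
      exact hm hb hw hmem.2
  linarith

include hx hy hT hW in
lemma ident_mono_H {i : Fin n} (hm : StrictMonoOn T (Ioo (x i.castSucc) (x i.succ)))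
    {w : ℝ} (hw : w ∈ Ioo (x i.castSucc) (x i.succ)) :
    Hf T p (T w) = Hf T p w + (Hf T p (y (σ i).castSucc) - Gf T p (x i.castSucc)) := by
  have hTw : T w ∈ Ioo (y (σ i).castSucc) (y (σ i).succ) := (hT i).1.mapsTo hw
  have e1 : Hf T p (T w) = Hf T p (y (σ i).castSucc) +
      freq (orb T p) (Ioc (y (σ i).castSucc) (T w)) := freq_Iic_split hTw.1.le
  have e2 : Hf T p w = Hf T p (x i.castSucc) +
      freq (orb T p) (Ioc (x i.castSucc) w) := freq_Iic_split hw.1.le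
  have e2' : Hf T p (x i.castSucc) = Gf T p (x i.castSucc) := (GH_x hx hW _).symm
  have e4 : freq (orb T p) (Ioc (y (σ i).castSucc) (T w)) =
      freq (orb T p) (Ioc (x i.castSucc) w) := by
    apply freq_shift
    intro m
    constructor
    · intro hmem
      have hWm : W m = i :=
        W_eq_of_ywindow hy hT hW m hmem.1.le (hmem.2.trans hTw.2.le)
      have hb : orb T p m ∈ Ioo (x i.castSucc) (x i.succ) := by
        rw [← hWm]; exact orb_mem_branch hW m
      refine ⟨hb.1, ?_⟩
      exact (hm.le_iff_le hb hw).1 (by rw [← orb_succ T p _]; exact hmem.2)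
    · intro hmem
      have hWm : W m = i := W_eq_of_window hx hW m hmem.1.le (hmem.2.trans hw.2.le)
      have hb : orb T p m ∈ Ioo (x i.castSucc) (x i.succ) := by
        rw [← hWm]; exact orb_mem_branch hW m
      have hy' : orb T p (m+1) ∈ Ioo (y (σ i).castSucc) (y (σ i).succ) := by
        rw [← hWm]; exact orb_succ_mem hT hW m
      refine ⟨hy'.1, ?_⟩
      rw [orb_succ T p _]
      exact (hm.le_iff_le hb hw).2 hmem.2
  linarith

include hx hy hT hW in
lemma ident_anti_H {i : Fin n} (hm : StrictAntiOn T (Ioo (x i.castSucc) (x i.succ)))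
    {w : ℝ} (hw : w ∈ Ioo (x i.castSucc) (x i.succ)) :
    Hf T p (T w) = Hf T p (y (σ i).castSucc) + Gf T p (x i.succ) - Gf T p w := by
  have hTw : T w ∈ Ioo (y (σ i).castSucc) (y (σ i).succ) := (hT i).1.mapsTo hw
  have e1 : Hf T p (T w) = Hf T p (y (σ i).castSucc) +
      freq (orb T p) (Ioc (y (σ i).castSucc) (T w)) := freq_Iic_split hTw.1.le
  have e2 : Gf T p (x i.succ) = Gf T p w +
      freq (orb T p) (Ico w (x i.succ)) := freq_Iio_split' hw.2.le
  have e4 : freq (orb T p) (Ioc (y (σ i).castSucc) (T w)) =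
      freq (orb T p) (Ico w (x i.succ)) := by
    apply freq_shift
    intro m
    constructor
    · intro hmem
      have hWm : W m = i :=
        W_eq_of_ywindow hy hT hW m hmem.1.le (hmem.2.trans hTw.2.le)
      have hb : orb T p m ∈ Ioo (x i.castSucc) (x i.succ) := by
        rw [← hWm]; exact orb_mem_branch hW m
      refine ⟨?_, hb.2⟩
      exact (hm.le_iff_ge hb hw).1 (by rw [← orb_succ T p _]; exact hmem.2)
    · intro hmem
      have hWm : W m = i := W_eq_of_window hx hW m (hw.1.le.trans hmem.1) hmem.2.le
      have hb : orb T p m ∈ Ioo (x i.castSucc) (x i.succ) := by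
        rw [← hWm]; exact orb_mem_branch hW m
      have hy' : orb T p (m+1) ∈ Ioo (y (σ i).castSucc) (y (σ i).succ) := by
        rw [← hWm]; exact orb_succ_mem hT hW m
      refine ⟨hy'.1, ?_⟩
      rw [orb_succ T p _]
      exact (hm.le_iff_ge hb hw).2 hmem.1
  linarith

include hx hy hT hW in
lemma ident_anti_G {i : Fin n} (hm : StrictAntiOn T (Ioo (x i.castSucc) (x i.succ)))
    {w : ℝ} (hw : w ∈ Ioo (x i.castSucc) (x i.succ)) :
    Gf T p (T w) = Hf T p (y (σ i).castSucc) + Gf T p (x i.succ) - Hf T p w := by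
  have hTw : T w ∈ Ioo (y (σ i).castSucc) (y (σ i).succ) := (hT i).1.mapsTo hw
  have e1 : Gf T p (T w) = Hf T p (y (σ i).castSucc) +
      freq (orb T p) (Ioo (y (σ i).castSucc) (T w)) := freq_Iio_split hTw.1
  have e2 : Hf T p (x i.succ) = Hf T p w +
      freq (orb T p) (Ioc w (x i.succ)) := freq_Iic_split hw.2.le
  have e2' : Hf T p (x i.succ) = Gf T p (x i.succ) := (GH_x hx hW _).symm
  have e4 : freq (orb T p) (Ioo (y (σ i).castSucc) (T w)) =
      freq (orb T p) (Ioc w (x i.succ)) := by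
    apply freq_shift
    intro m
    constructor
    · intro hmem
      have hWm : W m = i :=
        W_eq_of_ywindow hy hT hW m hmem.1.le (hmem.2.le.trans hTw.2.le)
      have hb : orb T p m ∈ Ioo (x i.castSucc) (x i.succ) := by
        rw [← hWm]; exact orb_mem_branch hW m
      refine ⟨?_, hb.2.le⟩
      exact (hm.lt_iff_gt hb hw).1 (by rw [← orb_succ T p _]; exact hmem.2)
    · intro hmem
      have hWm : W m = i := W_eq_of_window hx hW m (hw.1.le.trans hmem.1.le) hmem.2
      have hb : orb T p m ∈ Ioo (x i.castSucc) (x i.succ) := by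
        rw [← hWm]; exact orb_mem_branch hW m
      have hy' : orb T p (m+1) ∈ Ioo (y (σ i).castSucc) (y (σ i).succ) := by
        rw [← hWm]; exact orb_succ_mem hT hW m
      refine ⟨hy'.1, ?_⟩
      rw [orb_succ T p _]
      exact hm hw hb hmem.1
  linarith

end withHyp

section Fincover

variable {f : Fin (n+1) → ℝ}

lemma exists_Ico_mem (hf : Monotone f) {u : ℝ} (hu : u ∈ Ico (f 0) (f (Fin.last n))) :
    ∃ i : Fin n, u ∈ Ico (f i.castSucc) (f i.succ) := by
  classical
  set s : Finset (Fin (n+1)) := Finset.univ.filter (fun j => f j ≤ u) with hs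
  have h0 : (0 : Fin (n+1)) ∈ s := by simp [hs, hu.1]
  have hne : s.Nonempty := ⟨0, h0⟩
  set j0 := s.max' hne with hj0
  have hj0mem : j0 ∈ s := s.max'_mem hne
  have hj0le : f j0 ≤ u := by
    have := hj0mem; simp [hs] at this; exact this
  have hj0ne : j0 ≠ Fin.last n := by
    intro hc
    rw [hc] at hj0le
    exact absurd hu.2 (not_lt.2 hj0le)
  refine ⟨j0.castPred hj0ne, ?_, ?_⟩
  · rw [Fin.castSucc_castPred]; exact hj0le
  · by_contra hc
    push_neg at hc
    have hmem : (j0.castPred hj0ne).succ ∈ s := by simp [hs, hc]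
    have hle := s.le_max' _ hmem
    rw [← hj0] at hle
    have : j0 < (j0.castPred hj0ne).succ := by
      conv_lhs => rw [← Fin.castSucc_castPred (h := hj0ne)]
      exact Fin.castSucc_lt_succ
    exact absurd hle (not_le.2 this)

lemma exists_Ioc_mem (hf : Monotone f) {u : ℝ} (hu : u ∈ Ioc (f 0) (f (Fin.last n))) :
    ∃ i : Fin n, u ∈ Ioc (f i.castSucc) (f i.succ) := by
  classical
  set s : Finset (Fin (n+1)) := Finset.univ.filter (fun j => u ≤ f j) with hs
  have h0 : (Fin.last n) ∈ s := by simp [hs, hu.2]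
  have hne : s.Nonempty := ⟨_, h0⟩
  set j0 := s.min' hne with hj0
  have hj0mem : j0 ∈ s := s.min'_mem hne
  have hj0le : u ≤ f j0 := by
    have := hj0mem; simp [hs] at this; exact this
  have hj0ne : j0 ≠ 0 := by
    intro hc
    rw [hc] at hj0le
    exact absurd hu.1 (not_lt.2 hj0le)
  refine ⟨j0.pred hj0ne, ?_, ?_⟩
  · by_contra hc
    push_neg at hc
    have hmem : (j0.pred hj0ne).castSucc ∈ s := by simp [hs, hc]
    have hle := s.min'_le _ hmem
    rw [← hj0] at hle
    have : (j0.pred hj0ne).castSucc < j0 := by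
      conv_rhs => rw [← Fin.succ_pred j0 hj0ne]
      exact Fin.castSucc_lt_succ
    exact absurd hle (not_le.2 this)
  · rw [Fin.succ_pred]; exact hj0le

lemma Ico_fin_inj (hf : Monotone f) {u : ℝ} {i j : Fin n}
    (hi : u ∈ Ico (f i.castSucc) (f i.succ)) (hj : u ∈ Ico (f j.castSucc) (f j.succ)) :
    i = j := by
  rcases lt_trichotomy i j with h | h | h
  · have := hf (Fin.succ_le_castSucc' h)
    exact absurd hj.1 (not_le.2 (lt_of_lt_of_le hi.2 this))
  · exact h
  · have := hf (Fin.succ_le_castSucc' h)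
    exact absurd hi.1 (not_le.2 (lt_of_lt_of_le hj.2 this))

lemma Ioc_fin_inj (hf : Monotone f) {u : ℝ} {i j : Fin n}
    (hi : u ∈ Ioc (f i.castSucc) (f i.succ)) (hj : u ∈ Ioc (f j.castSucc) (f j.succ)) :
    i = j := by
  rcases lt_trichotomy i j with h | h | h
  · have := hf (Fin.succ_le_castSucc' h)
    exact absurd hj.1 (not_lt.2 (hi.2.trans this))
  · exact h
  · have := hf (Fin.succ_le_castSucc' h)
    exact absurd hi.1 (not_lt.2 (hj.2.trans this))

end Fincover

variable (x y σ T p) in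
noncomputable def cellP (i : Fin n) : Set ℝ :=
  Ico (Gf T p (x i.castSucc) / 2) (Gf T p (x i.succ) / 2)

variable (x y σ T p) in
noncomputable def cellM (i : Fin n) : Set ℝ :=
  Ico (1 - Gf T p (x i.succ) / 2) (1 - Gf T p (x i.castSucc) / 2)

variable (x y σ T p) in
noncomputable def hcP (j : Fin n) : Set ℝ :=
  Ico (Hf T p (y j.castSucc) / 2) (Hf T p (y j.succ) / 2)

variable (x y σ T p) in
noncomputable def hcM (j : Fin n) : Set ℝ :=
  Ico (1 - Hf T p (y j.succ) / 2) (1 - Hf T p (y j.castSucc) / 2)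

open Classical in
variable (x y σ T p) in
noncomputable def tP (i : Fin n) : ℝ :=
  if StrictMonoOn T (Ioo (x i.castSucc) (x i.succ)) then
    (Hf T p (y (σ i).castSucc) - Gf T p (x i.castSucc)) / 2
  else 1 - (Hf T p (y (σ i).castSucc) + Gf T p (x i.succ)) / 2

open Classical in
variable (x y σ T p) in
noncomputable def tM (i : Fin n) : ℝ :=
  if StrictMonoOn T (Ioo (x i.castSucc) (x i.succ)) then
    (Gf T p (x i.castSucc) - Hf T p (y (σ i).castSucc)) / 2
  else (Hf T p (y (σ i).castSucc) + Gf T p (x i.succ)) / 2 - 1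

open Classical in
variable (x y σ T p) in
noncomputable def Smap : ℝ → ℝ := fun u =>
  if h : ∃ i : Fin n, u ∈ cellP x T p i then u + tP x y σ T p h.choose
  else if h' : ∃ i : Fin n, u ∈ cellM x T p i then u + tM x y σ T p h'.choose
  else u

variable (x y σ T p) in
noncomputable def Vset (i : Fin n) : Set ℝ := cellP x T p i ∪ cellM x T p i

lemma cellP_subset {i : Fin n} : cellP x T p i ⊆ Ico (0:ℝ) (1/2) := by
  intro u hu
  constructor
  · exact le_trans (by linarith [(Gf_mem (T := T) (p := p) (x i.castSucc)).1]) hu.1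
  · exact lt_of_lt_of_le hu.2 (by linarith [(Gf_mem (T := T) (p := p) (x i.succ)).2])

lemma cellM_subset {i : Fin n} : cellM x T p i ⊆ Ico (1/2 : ℝ) 1 := by
  intro u hu
  constructor
  · exact le_trans (by linarith [(Gf_mem (T := T) (p := p) (x i.succ)).2]) hu.1
  · exact lt_of_lt_of_le hu.2 (by linarith [(Gf_mem (T := T) (p := p) (x i.castSucc)).1])

lemma hcP_subset {j : Fin n} : hcP y T p j ⊆ Ico (0:ℝ) (1/2) := by
  intro u hu
  constructor
  · exact le_trans (by linarith [(Hf_mem (T := T) (p := p) (y j.castSucc)).1]) hu.1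
  · exact lt_of_lt_of_le hu.2 (by linarith [(Hf_mem (T := T) (p := p) (y j.succ)).2])

lemma hcM_subset {j : Fin n} : hcM y T p j ⊆ Ico (1/2 : ℝ) 1 := by
  intro u hu
  constructor
  · exact le_trans (by linarith [(Hf_mem (T := T) (p := p) (y j.succ)).2]) hu.1
  · exact lt_of_lt_of_le hu.2 (by linarith [(Hf_mem (T := T) (p := p) (y j.castSucc)).1])

lemma gf_half_mono (hx : StrictMono x) : Monotone (fun j : Fin (n+1) => Gf T p (x j) / 2) :=
  fun j j' h => by
    have := Gf_mono (T := T) (p := p) (hx.monotone h)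
    linarith

lemma hf_half_mono (hy : StrictMono y) : Monotone (fun j : Fin (n+1) => Hf T p (y j) / 2) :=
  fun j j' h => by
    have := Hf_mono (T := T) (p := p) (hy.monotone h)
    linarith

lemma cellP_inj (hx : StrictMono x) {u : ℝ} {i j : Fin n}
    (hi : u ∈ cellP x T p i) (hj : u ∈ cellP x T p j) : i = j :=
  Ico_fin_inj (gf_half_mono hx) hi hj

lemma cellM_inj (hx : StrictMono x) {u : ℝ} {i j : Fin n}
    (hi : u ∈ cellM x T p i) (hj : u ∈ cellM x T p j) : i = j := by
  have hi' : 1 - u ∈ Ioc (Gf T p (x i.castSucc) / 2) (Gf T p (x i.succ) / 2) := by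
    constructor <;> [linarith [hi.2]; linarith [hi.1]]
  have hj' : 1 - u ∈ Ioc (Gf T p (x j.castSucc) / 2) (Gf T p (x j.succ) / 2) := by
    constructor <;> [linarith [hj.2]; linarith [hj.1]]
  exact Ioc_fin_inj (gf_half_mono hx) hi' hj'

lemma hcP_inj (hy : StrictMono y) {u : ℝ} {i j : Fin n}
    (hi : u ∈ hcP y T p i) (hj : u ∈ hcP y T p j) : i = j :=
  Ico_fin_inj (hf_half_mono hy) hi hj

lemma hcM_inj (hy : StrictMono y) {u : ℝ} {i j : Fin n}
    (hi : u ∈ hcM y T p i) (hj : u ∈ hcM y T p j) : i = j := by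
  have hi' : 1 - u ∈ Ioc (Hf T p (y i.castSucc) / 2) (Hf T p (y i.succ) / 2) := by
    constructor <;> [linarith [hi.2]; linarith [hi.1]]
  have hj' : 1 - u ∈ Ioc (Hf T p (y j.castSucc) / 2) (Hf T p (y j.succ) / 2) := by
    constructor <;> [linarith [hj.2]; linarith [hj.1]]
  exact Ioc_fin_inj (hf_half_mono hy) hi' hj'

lemma Smap_apply_P (hx : StrictMono x) {u : ℝ} {i : Fin n} (hu : u ∈ cellP x T p i) :
    Smap x y σ T p u = u + tP x y σ T p i := by
  have h : ∃ j : Fin n, u ∈ cellP x T p j := ⟨i, hu⟩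
  rw [Smap, dif_pos h]
  congr 2
  exact cellP_inj hx h.choose_spec hu

lemma Smap_apply_M (hx : StrictMono x) {u : ℝ} {i : Fin n} (hu : u ∈ cellM x T p i) :
    Smap x y σ T p u = u + tM x y σ T p i := by
  have hnP : ¬ ∃ j : Fin n, u ∈ cellP x T p j := by
    rintro ⟨j, hj⟩
    have h1 := (cellP_subset hj).2
    have h2 := (cellM_subset hu).1
    linarith
  have h : ∃ j : Fin n, u ∈ cellM x T p j := ⟨i, hu⟩
  rw [Smap, dif_neg hnP, dif_pos h]
  congr 2
  exact cellM_inj hx h.choose_spec hu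

section withHyp2

variable (hx : StrictMono x) (hy : StrictMono y)
  (hT : ∀ i : Fin n,
      Set.BijOn T (Set.Ioo (x i.castSucc) (x i.succ))
        (Set.Ioo (y (σ i).castSucc) (y (σ i).succ)) ∧
      ContinuousOn T (Set.Ioo (x i.castSucc) (x i.succ)) ∧
      (StrictMonoOn T (Set.Ioo (x i.castSucc) (x i.succ)) ∨
       StrictAntiOn T (Set.Ioo (x i.castSucc) (x i.succ))))
  (hW : ∀ (m : ℕ) (i : Fin n),
      W m = i ↔ T^[m] p ∈ Set.Ioo (x i.castSucc) (x i.succ))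

include hx in
lemma not_mono_of_anti {i : Fin n} (hanti : StrictAntiOn T (Ioo (x i.castSucc) (x i.succ))) :
    ¬ StrictMonoOn T (Ioo (x i.castSucc) (x i.succ)) := by
  intro hmono
  have hab : x i.castSucc < x i.succ := hx ((Fin.castSucc_lt_succ (i := i)))
  set a := x i.castSucc
  set b := x i.succ
  have h1 : (2*a+b)/3 ∈ Ioo a b := ⟨by linarith, by linarith⟩
  have h2 : (a+2*b)/3 ∈ Ioo a b := ⟨by linarith, by linarith⟩
  have hlt : (2*a+b)/3 < (a+2*b)/3 := by linarith
  exact absurd (hmono h1 h2 hlt) (not_lt.2 (hanti h1 h2 hlt).le)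

lemma tP_mono {i : Fin n} (hmono : StrictMonoOn T (Ioo (x i.castSucc) (x i.succ))) :
    tP x y σ T p i = (Hf T p (y (σ i).castSucc) - Gf T p (x i.castSucc)) / 2 := if_pos hmono

include hx in
lemma tP_anti {i : Fin n} (hanti : StrictAntiOn T (Ioo (x i.castSucc) (x i.succ))) :
    tP x y σ T p i = 1 - (Hf T p (y (σ i).castSucc) + Gf T p (x i.succ)) / 2 :=
  if_neg (not_mono_of_anti hx hanti)

lemma tM_mono {i : Fin n} (hmono : StrictMonoOn T (Ioo (x i.castSucc) (x i.succ))) :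
    tM x y σ T p i = (Gf T p (x i.castSucc) - Hf T p (y (σ i).castSucc)) / 2 := if_pos hmono

include hx in
lemma tM_anti {i : Fin n} (hanti : StrictAntiOn T (Ioo (x i.castSucc) (x i.succ))) :
    tM x y σ T p i = (Hf T p (y (σ i).castSucc) + Gf T p (x i.succ)) / 2 - 1 :=
  if_neg (not_mono_of_anti hx hanti)

include hx hy hT hW in
lemma target_P_mono {i : Fin n} (hmono : StrictMonoOn T (Ioo (x i.castSucc) (x i.succ)))
    {u : ℝ} (hu : u ∈ cellP x T p i) : Smap x y σ T p u ∈ hcP y T p (σ i) := by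
  rw [Smap_apply_P hx hu, tP_mono hmono]
  have hms := meas_branch hx hy hT hW i
  exact ⟨by linarith [hu.1], by linarith [hu.2]⟩

include hx hy hT hW in
lemma target_P_anti {i : Fin n} (hanti : StrictAntiOn T (Ioo (x i.castSucc) (x i.succ)))
    {u : ℝ} (hu : u ∈ cellP x T p i) : Smap x y σ T p u ∈ hcM y T p (σ i) := by
  rw [Smap_apply_P hx hu, tP_anti hx hanti]
  have hms := meas_branch hx hy hT hW i
  exact ⟨by linarith [hu.1], by linarith [hu.2]⟩

include hx hy hT hW in
lemma target_M_mono {i : Fin n} (hmono : StrictMonoOn T (Ioo (x i.castSucc) (x i.succ)))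
    {u : ℝ} (hu : u ∈ cellM x T p i) : Smap x y σ T p u ∈ hcM y T p (σ i) := by
  rw [Smap_apply_M hx hu, tM_mono hmono]
  have hms := meas_branch hx hy hT hW i
  exact ⟨by linarith [hu.1], by linarith [hu.2]⟩

include hx hy hT hW in
lemma target_M_anti {i : Fin n} (hanti : StrictAntiOn T (Ioo (x i.castSucc) (x i.succ)))
    {u : ℝ} (hu : u ∈ cellM x T p i) : Smap x y σ T p u ∈ hcP y T p (σ i) := by
  rw [Smap_apply_M hx hu, tM_anti hx hanti]
  have hms := meas_branch hx hy hT hW i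
  exact ⟨by linarith [hu.1], by linarith [hu.2]⟩

include hx hW in
lemma cell_cover {u : ℝ} (hu : u ∈ Ico (0:ℝ) 1) :
    (∃ i : Fin n, u ∈ cellP x T p i) ∨ (∃ i : Fin n, u ∈ cellM x T p i) := by
  have hf0 : Gf T p (x 0) / 2 = 0 := by rw [Gf_x_zero hx hW]; norm_num
  have hfl : Gf T p (x (Fin.last n)) / 2 = 1/2 := by rw [Gf_x_last hx hW]
  rcases lt_or_ge u (1/2) with h | h
  · left
    exact exists_Ico_mem (gf_half_mono hx) ⟨by rw [hf0]; exact hu.1, by rw [hfl]; exact h⟩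
  · right
    obtain ⟨i, hi⟩ := exists_Ioc_mem (f := fun j => Gf T p (x j) / 2) (gf_half_mono hx)
      (u := 1 - u) ⟨by rw [hf0]; linarith [hu.2], by rw [hfl]; linarith⟩
    exact ⟨i, by constructor <;> [linarith [hi.2]; linarith [hi.1]]⟩

include hy hT hW in
lemma ycell_cover {w : ℝ} (hw : w ∈ Ico (0:ℝ) 1) (hy1 : y (Fin.last n) = 1) (hp1 : p ≤ 1) :
    (∃ j : Fin n, w ∈ hcP y T p j) ∨ (∃ j : Fin n, w ∈ hcM y T p j) := by
  have hf0 : Hf T p (y 0) / 2 = 0 := by rw [Hf_y_zero hy hT hW]; norm_num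
  have hfl : Hf T p (y (Fin.last n)) / 2 = 1/2 := by rw [Hf_y_last hy hT hW hy1 hp1]
  rcases lt_or_ge w (1/2) with h | h
  · left
    exact exists_Ico_mem (hf_half_mono hy) ⟨by rw [hf0]; exact hw.1, by rw [hfl]; exact h⟩
  · right
    obtain ⟨j, hj⟩ := exists_Ioc_mem (f := fun j => Hf T p (y j) / 2) (hf_half_mono hy)
      (u := 1 - w) ⟨by rw [hf0]; linarith [hw.2], by rw [hfl]; linarith⟩
    exact ⟨j, by constructor <;> [linarith [hj.2]; linarith [hj.1]]⟩

open Classical in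
variable (x y σ T p) in
noncomputable def Sinv : ℝ → ℝ := fun w =>
  if h : ∃ j : Fin n, w ∈ hcP y T p j then
    (if StrictMonoOn T (Ioo (x (σ.symm h.choose).castSucc) (x (σ.symm h.choose).succ)) then
      w - tP x y σ T p (σ.symm h.choose) else w - tM x y σ T p (σ.symm h.choose))
  else if h' : ∃ j : Fin n, w ∈ hcM y T p j then
    (if StrictMonoOn T (Ioo (x (σ.symm h'.choose).castSucc) (x (σ.symm h'.choose).succ)) then
      w - tM x y σ T p (σ.symm h'.choose) else w - tP x y σ T p (σ.symm h'.choose))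
  else w

open Classical in
include hy in
lemma Sinv_apply_P {w : ℝ} {j : Fin n} (hw : w ∈ hcP y T p j) :
    Sinv x y σ T p w =
      if StrictMonoOn T (Ioo (x (σ.symm j).castSucc) (x (σ.symm j).succ)) then
        w - tP x y σ T p (σ.symm j) else w - tM x y σ T p (σ.symm j) := by
  have h : ∃ j' : Fin n, w ∈ hcP y T p j' := ⟨j, hw⟩
  rw [Sinv, dif_pos h, hcP_inj hy h.choose_spec hw]

open Classical in
include hy in
lemma Sinv_apply_M {w : ℝ} {j : Fin n} (hw : w ∈ hcM y T p j) :
    Sinv x y σ T p w =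
      if StrictMonoOn T (Ioo (x (σ.symm j).castSucc) (x (σ.symm j).succ)) then
        w - tM x y σ T p (σ.symm j) else w - tP x y σ T p (σ.symm j) := by
  have hnP : ¬ ∃ j' : Fin n, w ∈ hcP y T p j' := by
    rintro ⟨j', hj'⟩
    have h1 := (hcP_subset hj').2
    have h2 := (hcM_subset hw).1
    linarith
  have h : ∃ j' : Fin n, w ∈ hcM y T p j' := ⟨j, hw⟩
  rw [Sinv, dif_neg hnP, dif_pos h, hcM_inj hy h.choose_spec hw]

include hx hy hT hW in
lemma Sinv_Smap {u : ℝ} (hu : u ∈ Ico (0:ℝ) 1) : Sinv x y σ T p (Smap x y σ T p u) = u := by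
  rcases cell_cover hx hW hu with ⟨i, hi⟩ | ⟨i, hi⟩
  · rcases (hT i).2.2 with hmono | hanti
    · rw [Sinv_apply_P hy (target_P_mono hx hy hT hW hmono hi)]
      rw [if_pos (by rw [Equiv.symm_apply_apply]; exact hmono), Equiv.symm_apply_apply]
      rw [Smap_apply_P hx hi]; ring
    · rw [Sinv_apply_M hy (target_P_anti hx hy hT hW hanti hi)]
      rw [if_neg (by rw [Equiv.symm_apply_apply]; exact not_mono_of_anti hx hanti),
        Equiv.symm_apply_apply]
      rw [Smap_apply_P hx hi]; ring
  · rcases (hT i).2.2 with hmono | hanti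
    · rw [Sinv_apply_M hy (target_M_mono hx hy hT hW hmono hi)]
      rw [if_pos (by rw [Equiv.symm_apply_apply]; exact hmono), Equiv.symm_apply_apply]
      rw [Smap_apply_M hx hi]; ring
    · rw [Sinv_apply_P hy (target_M_anti hx hy hT hW hanti hi)]
      rw [if_neg (by rw [Equiv.symm_apply_apply]; exact not_mono_of_anti hx hanti),
        Equiv.symm_apply_apply]
      rw [Smap_apply_M hx hi]; ring

include hx hy hT hW in
lemma Smap_mapsTo : MapsTo (Smap x y σ T p) (Ico (0:ℝ) 1) (Ico (0:ℝ) 1) := by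
  intro u hu
  rcases cell_cover hx hW hu with ⟨i, hi⟩ | ⟨i, hi⟩
  · rcases (hT i).2.2 with hmono | hanti
    · have := target_P_mono hx hy hT hW hmono hi
      have h1 := hcP_subset this
      exact ⟨h1.1, by linarith [h1.2]⟩
    · have := target_P_anti hx hy hT hW hanti hi
      have h1 := hcM_subset this
      exact ⟨by linarith [h1.1], h1.2⟩
  · rcases (hT i).2.2 with hmono | hanti
    · have := target_M_mono hx hy hT hW hmono hi
      have h1 := hcM_subset this
      exact ⟨by linarith [h1.1], h1.2⟩
    · have := target_M_anti hx hy hT hW hanti hi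
      have h1 := hcP_subset this
      exact ⟨h1.1, by linarith [h1.2]⟩

include hx hy hT hW in
lemma Smap_surjOn (hy1 : y (Fin.last n) = 1) (hp1 : p ≤ 1) :
    SurjOn (Smap x y σ T p) (Ico (0:ℝ) 1) (Ico (0:ℝ) 1) := by
  intro w hw
  rcases ycell_cover hy hT hW hw hy1 hp1 with ⟨j, hj⟩ | ⟨j, hj⟩
  · set i := σ.symm j with hi
    have hji : j = σ i := by rw [hi, Equiv.apply_symm_apply]
    have hms := meas_branch hx hy hT hW i
    rw [hji] at hj
    rcases (hT i).2.2 with hmono | hanti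
    · refine ⟨w - tP x y σ T p i, ?_, ?_⟩
      · have hcell : w - tP x y σ T p i ∈ cellP x T p i := by
          rw [tP_mono hmono]
          exact ⟨by linarith [hj.1], by linarith [hj.2]⟩
        have h1 := cellP_subset hcell
        exact ⟨h1.1, by linarith [h1.2]⟩
      · have hcell : w - tP x y σ T p i ∈ cellP x T p i := by
          rw [tP_mono hmono]
          exact ⟨by linarith [hj.1], by linarith [hj.2]⟩
        rw [Smap_apply_P hx hcell]; ring
    · refine ⟨w - tM x y σ T p i, ?_, ?_⟩
      · have hcell : w - tM x y σ T p i ∈ cellM x T p i := by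
          rw [tM_anti hx hanti]
          exact ⟨by linarith [hj.1], by linarith [hj.2]⟩
        have h1 := cellM_subset hcell
        exact ⟨by linarith [h1.1], h1.2⟩
      · have hcell : w - tM x y σ T p i ∈ cellM x T p i := by
          rw [tM_anti hx hanti]
          exact ⟨by linarith [hj.1], by linarith [hj.2]⟩
        rw [Smap_apply_M hx hcell]; ring
  · set i := σ.symm j with hi
    have hji : j = σ i := by rw [hi, Equiv.apply_symm_apply]
    have hms := meas_branch hx hy hT hW i
    rw [hji] at hj
    rcases (hT i).2.2 with hmono | hanti
    · refine ⟨w - tM x y σ T p i, ?_, ?_⟩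
      · have hcell : w - tM x y σ T p i ∈ cellM x T p i := by
          rw [tM_mono hmono]
          exact ⟨by linarith [hj.1], by linarith [hj.2]⟩
        have h1 := cellM_subset hcell
        exact ⟨by linarith [h1.1], h1.2⟩
      · have hcell : w - tM x y σ T p i ∈ cellM x T p i := by
          rw [tM_mono hmono]
          exact ⟨by linarith [hj.1], by linarith [hj.2]⟩
        rw [Smap_apply_M hx hcell]; ring
    · refine ⟨w - tP x y σ T p i, ?_, ?_⟩
      · have hcell : w - tP x y σ T p i ∈ cellP x T p i := by
          rw [tP_anti hx hanti]
          exact ⟨by linarith [hj.1], by linarith [hj.2]⟩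
        have h1 := cellP_subset hcell
        exact ⟨h1.1, by linarith [h1.2]⟩
      · have hcell : w - tP x y σ T p i ∈ cellP x T p i := by
          rw [tP_anti hx hanti]
          exact ⟨by linarith [hj.1], by linarith [hj.2]⟩
        rw [Smap_apply_P hx hcell]; ring

include hx hy hT hW in
lemma Smap_bijOn (hy1 : y (Fin.last n) = 1) (hp1 : p ≤ 1) :
    BijOn (Smap x y σ T p) (Ico (0:ℝ) 1) (Ico (0:ℝ) 1) := by
  refine ⟨Smap_mapsTo hx hy hT hW, ?_, Smap_surjOn hx hy hT hW hy1 hp1⟩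
  intro u hu u' hu' heq
  have h1 := Sinv_Smap hx hy hT hW hu
  have h2 := Sinv_Smap hx hy hT hW hu'
  rw [← h1, ← h2, heq]

include hx hT in
lemma pullback_mono {i : Fin n} (hmono : StrictMonoOn T (Ioo (x i.castSucc) (x i.succ)))
    {α' β' : ℝ} (hα'u : ∀ m, orb T p m ≠ α') (hβ'u : ∀ m, orb T p m ≠ β')
    (hW' : ∀ m, orb T p m ≠ x i.castSucc) (hW'' : ∀ m, orb T p m ≠ x i.succ)
    (hAB : max α' (y (σ i).castSucc) < min β' (y (σ i).succ)) :
    ∃ α β : ℝ, α < β ∧ (∀ m, orb T p m ≠ α) ∧ (∀ m, orb T p m ≠ β) ∧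
      (∀ z ∈ Ioo α β, z ∈ Ioo (x i.castSucc) (x i.succ) ∧ T z ∈ Ioo α' β') ∧
      ((α = x i.castSucc ∧ max α' (y (σ i).castSucc) = y (σ i).castSucc) ∨
        (α ∈ Ioo (x i.castSucc) (x i.succ) ∧ T α = max α' (y (σ i).castSucc))) ∧
      ((β = x i.succ ∧ min β' (y (σ i).succ) = y (σ i).succ) ∨
        (β ∈ Ioo (x i.castSucc) (x i.succ) ∧ T β = min β' (y (σ i).succ))) := by
  set lcy := y (σ i).castSucc with hlcy
  set rcy := y (σ i).succ with hrcy
  set lcx := x i.castSucc with hlcx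
  set rcx := x i.succ with hrcx
  set A := max α' lcy with hA
  set B := min β' rcy with hB
  have hA1 : lcy ≤ A := le_max_right _ _
  have hB1 : B ≤ rcy := min_le_right _ _
  have hAltr : A < rcy := lt_of_lt_of_le hAB hB1
  have hBgt : lcy < B := lt_of_le_of_lt hA1 hAB
  -- construct α
  have hαex : ∃ α : ℝ, ((α = lcx ∧ A = lcy) ∨ (α ∈ Ioo lcx rcx ∧ T α = A)) ∧
      (∀ m, orb T p m ≠ α) := by
    rcases eq_or_lt_of_le hA1 with hAeq | hAlt
    · exact ⟨lcx, Or.inl ⟨rfl, hAeq.symm⟩, hW'⟩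
    · obtain ⟨α, hαmem, hTα⟩ := (hT i).1.surjOn ⟨hAlt, hAltr⟩
      have hα'gt : lcy < α' := by
        by_contra hcon
        push_neg at hcon
        rw [hA] at hAlt
        rw [max_eq_right hcon] at hAlt
        exact lt_irrefl _ hAlt
      have hAα' : A = α' := max_eq_left hα'gt.le
      refine ⟨α, Or.inr ⟨hαmem, hTα⟩, ?_⟩
      intro m hc
      apply hα'u (m+1)
      rw [orb_succ, hc, hTα, ← hAα']
  -- construct β
  have hβex : ∃ β : ℝ, ((β = rcx ∧ B = rcy) ∨ (β ∈ Ioo lcx rcx ∧ T β = B)) ∧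
      (∀ m, orb T p m ≠ β) := by
    rcases eq_or_lt_of_le hB1 with hBeq | hBlt
    · exact ⟨rcx, Or.inl ⟨rfl, hBeq⟩, hW''⟩
    · obtain ⟨β, hβmem, hTβ⟩ := (hT i).1.surjOn ⟨hBgt, hBlt⟩
      have hβ'lt : β' < rcy := by
        by_contra hcon
        push_neg at hcon
        rw [hB] at hBlt
        rw [min_eq_right hcon] at hBlt
        exact lt_irrefl _ hBlt
      have hBβ' : B = β' := min_eq_left hβ'lt.le
      refine ⟨β, Or.inr ⟨hβmem, hTβ⟩, ?_⟩
      intro m hc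
      apply hβ'u (m+1)
      rw [orb_succ, hc, hTβ, ← hBβ']
  obtain ⟨α, hαd, hαu⟩ := hαex
  obtain ⟨β, hβd, hβu⟩ := hβex
  refine ⟨α, β, ?_, hαu, hβu, ?_, hαd, hβd⟩
  · rcases hαd with ⟨hα1, _⟩ | ⟨hαmem, hTα⟩ <;> rcases hβd with ⟨hβ1, _⟩ | ⟨hβmem, hTβ⟩
    · rw [hα1, hβ1]; exact hx ((Fin.castSucc_lt_succ (i := i)))
    · rw [hα1]; exact hβmem.1
    · rw [hβ1]; exact hαmem.2
    · exact (hmono.lt_iff_lt hαmem hβmem).1 (by rw [hTα, hTβ]; exact hAB)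
  · intro z hz
    have hzb : z ∈ Ioo lcx rcx := by
      constructor
      · rcases hαd with ⟨hα1, _⟩ | ⟨hαmem, _⟩
        · rw [← hα1]; exact hz.1
        · exact lt_trans hαmem.1 hz.1
      · rcases hβd with ⟨hβ1, _⟩ | ⟨hβmem, _⟩
        · rw [← hβ1]; exact hz.2
        · exact lt_trans hz.2 hβmem.2
    refine ⟨hzb, ?_, ?_⟩
    · -- T z > α'
      have hTz : T z ∈ Ioo lcy rcy := (hT i).1.mapsTo hzb
      rcases hαd with ⟨hα1, hα2⟩ | ⟨hαmem, hTα⟩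
      · have : α' ≤ lcy := max_eq_right_iff.1 hα2
        exact lt_of_le_of_lt this hTz.1
      · have h1 : T α < T z := hmono hαmem hzb hz.1
        rw [hTα] at h1
        exact lt_of_le_of_lt (le_max_left _ _) h1
    · -- T z < β'
      have hTz : T z ∈ Ioo lcy rcy := (hT i).1.mapsTo hzb
      rcases hβd with ⟨hβ1, hβ2⟩ | ⟨hβmem, hTβ⟩
      · have : rcy ≤ β' := min_eq_right_iff.1 hβ2
        exact lt_of_lt_of_le hTz.2 this
      · have h1 : T z < T β := hmono hzb hβmem hz.2
        rw [hTβ] at h1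
        exact lt_of_lt_of_le h1 (min_le_left _ _)

include hx hT in
lemma pullback_anti {i : Fin n} (hanti : StrictAntiOn T (Ioo (x i.castSucc) (x i.succ)))
    {α' β' : ℝ} (hα'u : ∀ m, orb T p m ≠ α') (hβ'u : ∀ m, orb T p m ≠ β')
    (hW' : ∀ m, orb T p m ≠ x i.castSucc) (hW'' : ∀ m, orb T p m ≠ x i.succ)
    (hAB : max α' (y (σ i).castSucc) < min β' (y (σ i).succ)) :
    ∃ α β : ℝ, α < β ∧ (∀ m, orb T p m ≠ α) ∧ (∀ m, orb T p m ≠ β) ∧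
      (∀ z ∈ Ioo α β, z ∈ Ioo (x i.castSucc) (x i.succ) ∧ T z ∈ Ioo α' β') ∧
      ((α = x i.castSucc ∧ min β' (y (σ i).succ) = y (σ i).succ) ∨
        (α ∈ Ioo (x i.castSucc) (x i.succ) ∧ T α = min β' (y (σ i).succ))) ∧
      ((β = x i.succ ∧ max α' (y (σ i).castSucc) = y (σ i).castSucc) ∨
        (β ∈ Ioo (x i.castSucc) (x i.succ) ∧ T β = max α' (y (σ i).castSucc))) := by
  set lcy := y (σ i).castSucc with hlcy
  set rcy := y (σ i).succ with hrcy
  set lcx := x i.castSucc with hlcx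
  set rcx := x i.succ with hrcx
  set A := max α' lcy with hA
  set B := min β' rcy with hB
  have hA1 : lcy ≤ A := le_max_right _ _
  have hB1 : B ≤ rcy := min_le_right _ _
  have hAltr : A < rcy := lt_of_lt_of_le hAB hB1
  have hBgt : lcy < B := lt_of_le_of_lt hA1 hAB
  have hαex : ∃ α : ℝ, ((α = lcx ∧ B = rcy) ∨ (α ∈ Ioo lcx rcx ∧ T α = B)) ∧
      (∀ m, orb T p m ≠ α) := by
    rcases eq_or_lt_of_le hB1 with hBeq | hBlt
    · exact ⟨lcx, Or.inl ⟨rfl, hBeq⟩, hW'⟩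
    · obtain ⟨α, hαmem, hTα⟩ := (hT i).1.surjOn ⟨hBgt, hBlt⟩
      have hβ'lt : β' < rcy := by
        by_contra hcon
        push_neg at hcon
        rw [hB] at hBlt
        rw [min_eq_right hcon] at hBlt
        exact lt_irrefl _ hBlt
      have hBβ' : B = β' := min_eq_left hβ'lt.le
      refine ⟨α, Or.inr ⟨hαmem, hTα⟩, ?_⟩
      intro m hc
      apply hβ'u (m+1)
      rw [orb_succ, hc, hTα, ← hBβ']
  have hβex : ∃ β : ℝ, ((β = rcx ∧ A = lcy) ∨ (β ∈ Ioo lcx rcx ∧ T β = A)) ∧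
      (∀ m, orb T p m ≠ β) := by
    rcases eq_or_lt_of_le hA1 with hAeq | hAlt
    · exact ⟨rcx, Or.inl ⟨rfl, hAeq.symm⟩, hW''⟩
    · obtain ⟨β, hβmem, hTβ⟩ := (hT i).1.surjOn ⟨hAlt, hAltr⟩
      have hα'gt : lcy < α' := by
        by_contra hcon
        push_neg at hcon
        rw [hA] at hAlt
        rw [max_eq_right hcon] at hAlt
        exact lt_irrefl _ hAlt
      have hAα' : A = α' := max_eq_left hα'gt.le
      refine ⟨β, Or.inr ⟨hβmem, hTβ⟩, ?_⟩
      intro m hc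
      apply hα'u (m+1)
      rw [orb_succ, hc, hTβ, ← hAα']
  obtain ⟨α, hαd, hαu⟩ := hαex
  obtain ⟨β, hβd, hβu⟩ := hβex
  refine ⟨α, β, ?_, hαu, hβu, ?_, hαd, hβd⟩
  · rcases hαd with ⟨hα1, _⟩ | ⟨hαmem, hTα⟩ <;> rcases hβd with ⟨hβ1, _⟩ | ⟨hβmem, hTβ⟩
    · rw [hα1, hβ1]; exact hx ((Fin.castSucc_lt_succ (i := i)))
    · rw [hα1]; exact hβmem.1
    · rw [hβ1]; exact hαmem.2
    · exact (hanti.lt_iff_gt hβmem hαmem).1 (by rw [hTα, hTβ]; exact hAB)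
  · intro z hz
    have hzb : z ∈ Ioo lcx rcx := by
      constructor
      · rcases hαd with ⟨hα1, _⟩ | ⟨hαmem, _⟩
        · rw [← hα1]; exact hz.1
        · exact lt_trans hαmem.1 hz.1
      · rcases hβd with ⟨hβ1, _⟩ | ⟨hβmem, _⟩
        · rw [← hβ1]; exact hz.2
        · exact lt_trans hz.2 hβmem.2
    refine ⟨hzb, ?_, ?_⟩
    · have hTz : T z ∈ Ioo lcy rcy := (hT i).1.mapsTo hzb
      rcases hβd with ⟨hβ1, hβ2⟩ | ⟨hβmem, hTβ⟩
      · have : α' ≤ lcy := max_eq_right_iff.1 hβ2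
        exact lt_of_le_of_lt this hTz.1
      · have h1 : T β < T z := hanti hzb hβmem hz.2
        rw [hTβ] at h1
        exact lt_of_le_of_lt (le_max_left _ _) h1
    · have hTz : T z ∈ Ioo lcy rcy := (hT i).1.mapsTo hzb
      rcases hαd with ⟨hα1, hα2⟩ | ⟨hαmem, hTα⟩
      · have : rcy ≤ β' := min_eq_right_iff.1 hα2
        exact lt_of_lt_of_le hTz.2 this
      · have h1 : T z < T α := hanti hαmem hzb hz.1
        rw [hTα] at h1
        exact lt_of_lt_of_le h1 (min_le_left _ _)

lemma monoGf : Monotone (Gf T p) := fun _ _ h => Gf_mono h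
lemma monoHf : Monotone (Hf T p) := fun _ _ h => Hf_mono h

include hx hy hT hW in
lemma key_cover : ∀ (v : List (Fin n)), v ≠ [] → ∀ u : ℝ,
    (∀ j (hj : j < v.length), (Smap x y σ T p)^[j] u ∈ Vset x T p (v.get ⟨j, hj⟩)) →
    ∃ α β : ℝ, α < β ∧ (∀ m, orb T p m ≠ α) ∧ (∀ m, orb T p m ≠ β) ∧
      (∀ z ∈ Ioo α β, ∀ j (hj : j < v.length),
        T^[j] z ∈ Ioo (x (v.get ⟨j, hj⟩).castSucc) (x (v.get ⟨j, hj⟩).succ)) ∧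
      (u ∈ Ico (Gf T p α / 2) (Gf T p β / 2) ∨
       u ∈ Ico (1 - Hf T p β / 2) (1 - Hf T p α / 2)) := by
  intro v
  induction v with
  | nil => intro h; exact absurd rfl h
  | cons i v' IH =>
    intro _ u hu
    have h0 : u ∈ Vset x T p i := by
      have h := hu 0 (Nat.succ_pos _)
      rw [Function.iterate_zero_apply] at h
      exact h
    rcases eq_or_ne v' [] with hv'e | hv'
    · subst hv'e
      refine ⟨x i.castSucc, x i.succ, hx ((Fin.castSucc_lt_succ (i := i))),
        (fun m => orb_ne_x hx hW m _), (fun m => orb_ne_x hx hW m _), ?_, ?_⟩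
      · intro z hz j hj
        have hj0 : j = 0 := by
          simp only [List.length_cons, List.length_nil] at hj
          omega
        subst hj0
        exact hz
      · rcases h0 with h | h
        · exact Or.inl h
        · refine Or.inr ?_
          have e1 := GH_x hx hW (i.castSucc)
          have e2 := GH_x hx hW (i.succ)
          rw [← e1, ← e2]
          exact h
    · have hu1 : ∀ j (hj : j < v'.length),
          (Smap x y σ T p)^[j] (Smap x y σ T p u) ∈ Vset x T p (v'.get ⟨j, hj⟩) := by
        intro j hj
        have h := hu (j+1) (Nat.succ_lt_succ hj)
        rw [Function.iterate_succ_apply] at h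
        exact h
      obtain ⟨α', β', hαβ', hα'u, hβ'u, hz', hcov'⟩ := IH hv' (Smap x y σ T p u) hu1
      set lcy := y (σ i).castSucc with hlcy
      set rcy := y (σ i).succ with hrcy
      set lcx := x i.castSucc with hlcx
      set rcx := x i.succ with hrcx
      have hms := meas_branch hx hy hT hW i
      have hghl := GH_y hy hT hW ((σ i).castSucc)
      have hghr := GH_y hy hT hW ((σ i).succ)
      have hghlx := GH_x hx hW (i.castSucc)
      have hghrx := GH_x hx hW (i.succ)
      have hHl1 := (Hf_mem (T := T) (p := p) lcy).1
      have hHr2 := (Hf_mem (T := T) (p := p) rcy).2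
      have hHα'2 := (Hf_mem (T := T) (p := p) α').2
      have hHβ'2 := (Hf_mem (T := T) (p := p) β').2
      have hGβ'2 := (Gf_mem (T := T) (p := p) β').2
      have hzgoal : ∀ α β : ℝ, (∀ z ∈ Ioo α β, z ∈ Ioo lcx rcx ∧ T z ∈ Ioo α' β') →
          (∀ z ∈ Ioo α β, ∀ j (hj : j < (i :: v').length),
            T^[j] z ∈ Ioo (x ((i :: v').get ⟨j, hj⟩).castSucc)
              (x ((i :: v').get ⟨j, hj⟩).succ)) := by
        intro α β hzb z hz j hj
        match j, hj with
        | 0, _ => exact (hzb z hz).1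
        | (j'+1), hj =>
          rw [Function.iterate_succ_apply]
          exact hz' (T z) (hzb z hz).2 j' (Nat.lt_of_succ_lt_succ hj)
      rcases h0 with hP | hM <;> rcases (hT i).2.2 with hmono | hanti
      · -- cellP, mono
        have hSu := target_P_mono hx hy hT hW hmono hP
        have hcovL : Smap x y σ T p u ∈ Ico (Gf T p α' / 2) (Gf T p β' / 2) := by
          rcases hcov' with h | h
          · exact h
          · exfalso
            have h1 := h.1
            have h2 := hSu.2
            linarith [hHr2, hHβ'2]
        have hGA : Gf T p (max α' lcy) = max (Gf T p α') (Hf T p lcy) := by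
          rw [monoGf.map_max, hghl]
        have hGB : Gf T p (min β' rcy) = min (Gf T p β') (Hf T p rcy) := by
          rw [monoGf.map_min, hghr]
        have hb1 : Gf T p (max α' lcy) / 2 ≤ Smap x y σ T p u := by
          rw [hGA]
          rcases max_cases (Gf T p α') (Hf T p lcy) with ⟨he, _⟩ | ⟨he, _⟩ <;> rw [he]
          · exact hcovL.1
          · exact hSu.1
        have hb2 : Smap x y σ T p u < Gf T p (min β' rcy) / 2 := by
          rw [hGB]
          rcases min_cases (Gf T p β') (Hf T p rcy) with ⟨he, _⟩ | ⟨he, _⟩ <;> rw [he]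
          · exact hcovL.2
          · exact hSu.2
        have hABlt : max α' lcy < min β' rcy := by
          by_contra hcon
          push_neg at hcon
          have := Gf_mono (T := T) (p := p) hcon
          linarith
        obtain ⟨α, β, hαβ, hαu, hβu, hzb, hαd, hβd⟩ :=
          pullback_mono hx hT hmono hα'u hβ'u
            (fun m => orb_ne_x hx hW m _) (fun m => orb_ne_x hx hW m _) hABlt
        refine ⟨α, β, hαβ, hαu, hβu, hzgoal α β hzb, Or.inl ?_⟩
        have dα : Gf T p α = Gf T p (max α' lcy) - (Hf T p lcy - Gf T p lcx) := by
          rcases hαd with ⟨hα1, hα2⟩ | ⟨hαmem, hTα⟩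
          · rw [hα1, hα2, hghl]; ring
          · have := ident_mono_G hx hy hT hW hmono hαmem
            rw [hTα] at this
            linarith
        have dβ : Gf T p β = Gf T p (min β' rcy) - (Hf T p lcy - Gf T p lcx) := by
          rcases hβd with ⟨hβ1, hβ2⟩ | ⟨hβmem, hTβ⟩
          · rw [hβ1, hβ2, hghr]; linarith
          · have := ident_mono_G hx hy hT hW hmono hβmem
            rw [hTβ] at this
            linarith
        rw [Smap_apply_P hx hP, tP_mono hmono] at hb1 hb2
        constructor
        · linarith
        · linarith
      · -- cellP, anti
        have hSu := target_P_anti hx hy hT hW hanti hP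
        have hcovR : Smap x y σ T p u ∈ Ico (1 - Hf T p β' / 2) (1 - Hf T p α' / 2) := by
          rcases hcov' with h | h
          · exfalso
            have h1 := hSu.1
            have h2 := h.2
            linarith [hHl1, hGβ'2]
          · exact h
        have hHA : Hf T p (max α' lcy) = max (Hf T p α') (Hf T p lcy) := monoHf.map_max
        have hHB : Hf T p (min β' rcy) = min (Hf T p β') (Hf T p rcy) := monoHf.map_min
        have hb1 : 1 - Hf T p (min β' rcy) / 2 ≤ Smap x y σ T p u := by
          rw [hHB]
          rcases min_cases (Hf T p β') (Hf T p rcy) with ⟨he, _⟩ | ⟨he, _⟩ <;> rw [he]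
          · exact hcovR.1
          · exact hSu.1
        have hb2 : Smap x y σ T p u < 1 - Hf T p (max α' lcy) / 2 := by
          rw [hHA]
          rcases max_cases (Hf T p α') (Hf T p lcy) with ⟨he, _⟩ | ⟨he, _⟩ <;> rw [he]
          · exact hcovR.2
          · exact hSu.2
        have hABlt : max α' lcy < min β' rcy := by
          by_contra hcon
          push_neg at hcon
          have := Hf_mono (T := T) (p := p) hcon
          linarith
        obtain ⟨α, β, hαβ, hαu, hβu, hzb, hαd, hβd⟩ :=
          pullback_anti hx hT hanti hα'u hβ'u
            (fun m => orb_ne_x hx hW m _) (fun m => orb_ne_x hx hW m _) hABlt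
        refine ⟨α, β, hαβ, hαu, hβu, hzgoal α β hzb, Or.inl ?_⟩
        have dα : Gf T p α = Hf T p lcy + Gf T p rcx - Hf T p (min β' rcy) := by
          rcases hαd with ⟨hα1, hα2⟩ | ⟨hαmem, hTα⟩
          · rw [hα1, hα2]; linarith
          · have := ident_anti_H hx hy hT hW hanti hαmem
            rw [hTα] at this
            linarith
        have dβ : Gf T p β = Hf T p lcy + Gf T p rcx - Hf T p (max α' lcy) := by
          rcases hβd with ⟨hβ1, hβ2⟩ | ⟨hβmem, hTβ⟩
          · rw [hβ1, hβ2]; linarith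
          · have := ident_anti_H hx hy hT hW hanti hβmem
            rw [hTβ] at this
            linarith
        rw [Smap_apply_P hx hP, tP_anti hx hanti] at hb1 hb2
        constructor
        · linarith
        · linarith
      · -- cellM, mono
        have hSu := target_M_mono hx hy hT hW hmono hM
        have hcovR : Smap x y σ T p u ∈ Ico (1 - Hf T p β' / 2) (1 - Hf T p α' / 2) := by
          rcases hcov' with h | h
          · exfalso
            have h1 := hSu.1
            have h2 := h.2
            linarith [hHl1, hGβ'2]
          · exact h
        have hHA : Hf T p (max α' lcy) = max (Hf T p α') (Hf T p lcy) := monoHf.map_max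
        have hHB : Hf T p (min β' rcy) = min (Hf T p β') (Hf T p rcy) := monoHf.map_min
        have hb1 : 1 - Hf T p (min β' rcy) / 2 ≤ Smap x y σ T p u := by
          rw [hHB]
          rcases min_cases (Hf T p β') (Hf T p rcy) with ⟨he, _⟩ | ⟨he, _⟩ <;> rw [he]
          · exact hcovR.1
          · exact hSu.1
        have hb2 : Smap x y σ T p u < 1 - Hf T p (max α' lcy) / 2 := by
          rw [hHA]
          rcases max_cases (Hf T p α') (Hf T p lcy) with ⟨he, _⟩ | ⟨he, _⟩ <;> rw [he]
          · exact hcovR.2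
          · exact hSu.2
        have hABlt : max α' lcy < min β' rcy := by
          by_contra hcon
          push_neg at hcon
          have := Hf_mono (T := T) (p := p) hcon
          linarith
        obtain ⟨α, β, hαβ, hαu, hβu, hzb, hαd, hβd⟩ :=
          pullback_mono hx hT hmono hα'u hβ'u
            (fun m => orb_ne_x hx hW m _) (fun m => orb_ne_x hx hW m _) hABlt
        refine ⟨α, β, hαβ, hαu, hβu, hzgoal α β hzb, Or.inr ?_⟩
        have dα : Hf T p α = Hf T p (max α' lcy) - (Hf T p lcy - Gf T p lcx) := by
          rcases hαd with ⟨hα1, hα2⟩ | ⟨hαmem, hTα⟩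
          · rw [hα1, hα2, ← hghlx]; ring
          · have := ident_mono_H hx hy hT hW hmono hαmem
            rw [hTα] at this
            linarith
        have dβ : Hf T p β = Hf T p (min β' rcy) - (Hf T p lcy - Gf T p lcx) := by
          rcases hβd with ⟨hβ1, hβ2⟩ | ⟨hβmem, hTβ⟩
          · rw [hβ1, hβ2, ← hghrx]; linarith
          · have := ident_mono_H hx hy hT hW hmono hβmem
            rw [hTβ] at this
            linarith
        rw [Smap_apply_M hx hM, tM_mono hmono] at hb1 hb2
        constructor
        · linarith
        · linarith
      · -- cellM, anti
        have hSu := target_M_anti hx hy hT hW hanti hM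
        have hcovL : Smap x y σ T p u ∈ Ico (Gf T p α' / 2) (Gf T p β' / 2) := by
          rcases hcov' with h | h
          · exact h
          · exfalso
            have h1 := h.1
            have h2 := hSu.2
            linarith [hHr2, hHβ'2]
        have hGA : Gf T p (max α' lcy) = max (Gf T p α') (Hf T p lcy) := by
          rw [monoGf.map_max, hghl]
        have hGB : Gf T p (min β' rcy) = min (Gf T p β') (Hf T p rcy) := by
          rw [monoGf.map_min, hghr]
        have hb1 : Gf T p (max α' lcy) / 2 ≤ Smap x y σ T p u := by
          rw [hGA]
          rcases max_cases (Gf T p α') (Hf T p lcy) with ⟨he, _⟩ | ⟨he, _⟩ <;> rw [he]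
          · exact hcovL.1
          · exact hSu.1
        have hb2 : Smap x y σ T p u < Gf T p (min β' rcy) / 2 := by
          rw [hGB]
          rcases min_cases (Gf T p β') (Hf T p rcy) with ⟨he, _⟩ | ⟨he, _⟩ <;> rw [he]
          · exact hcovL.2
          · exact hSu.2
        have hABlt : max α' lcy < min β' rcy := by
          by_contra hcon
          push_neg at hcon
          have := Gf_mono (T := T) (p := p) hcon
          linarith
        obtain ⟨α, β, hαβ, hαu, hβu, hzb, hαd, hβd⟩ :=
          pullback_anti hx hT hanti hα'u hβ'u
            (fun m => orb_ne_x hx hW m _) (fun m => orb_ne_x hx hW m _) hABlt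
        refine ⟨α, β, hαβ, hαu, hβu, hzgoal α β hzb, Or.inr ?_⟩
        have dα : Hf T p α = Hf T p lcy + Gf T p rcx - Gf T p (min β' rcy) := by
          rcases hαd with ⟨hα1, hα2⟩ | ⟨hαmem, hTα⟩
          · rw [hα1, hα2, hghr, ← hghlx]; linarith
          · have := ident_anti_G hx hy hT hW hanti hαmem
            rw [hTα] at this
            linarith
        have dβ : Hf T p β = Hf T p lcy + Gf T p rcx - Gf T p (max α' lcy) := by
          rcases hβd with ⟨hβ1, hβ2⟩ | ⟨hβmem, hTβ⟩
          · rw [hβ1, hβ2, hghl, ← hghrx]; linarith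
          · have := ident_anti_G hx hy hT hW hanti hβmem
            rw [hTβ] at this
            linarith
        rw [Smap_apply_M hx hM, tM_anti hx hanti] at hb1 hb2
        constructor
        · linarith
        · linarith

lemma exists_orb_Ioo_G {α β : ℝ} (hα : ∀ m, orb T p m ≠ α) (h : Gf T p α < Gf T p β) :
    ∃ m, orb T p m ∈ Ioo α β := by
  have hαβ : α < β := by
    by_contra hcon
    push_neg at hcon
    exact absurd h (not_lt.2 (Gf_mono hcon))
  by_contra hcon
  push_neg at hcon
  have : Gf T p β = Gf T p α := by
    apply freq_congr
    intro m
    constructor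
    · intro hm
      rcases lt_trichotomy (orb T p m) α with h1 | h1 | h1
      · exact h1
      · exact absurd h1 (hα m)
      · exact absurd ⟨h1, hm⟩ (hcon m)
    · intro hm
      exact lt_trans hm hαβ
  linarith

lemma exists_orb_Ioo_H {α β : ℝ} (hβ : ∀ m, orb T p m ≠ β) (h : Hf T p α < Hf T p β) :
    ∃ m, orb T p m ∈ Ioo α β := by
  have hαβ : α < β := by
    by_contra hcon
    push_neg at hcon
    exact absurd h (not_lt.2 (Hf_mono hcon))
  by_contra hcon
  push_neg at hcon
  have : Hf T p β = Hf T p α := by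
    apply freq_congr
    intro m
    constructor
    · intro hm
      have hm' : orb T p m < β := lt_of_le_of_ne hm (hβ m)
      rcases le_or_gt (orb T p m) α with h1 | h1
      · exact h1
      · exact absurd ⟨h1, hm'⟩ (hcon m)
    · intro hm
      exact le_trans hm hαβ.le
  linarith

include hx hW in
lemma Vset_existsUnique {u : ℝ} (hu : u ∈ Ico (0:ℝ) 1) : ∃! i : Fin n, u ∈ Vset x T p i := by
  rcases cell_cover hx hW hu with ⟨i, hi⟩ | ⟨i, hi⟩
  · refine ⟨i, Or.inl hi, ?_⟩
    intro j hj
    rcases hj with hj | hj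
    · exact cellP_inj hx hj hi
    · exfalso
      have h1 := (cellM_subset hj).1
      have h2 := (cellP_subset hi).2
      linarith
  · refine ⟨i, Or.inr hi, ?_⟩
    intro j hj
    rcases hj with hj | hj
    · exfalso
      have h1 := (cellM_subset hi).1
      have h2 := (cellP_subset hj).2
      linarith
    · exact cellM_inj hx hj hi

lemma Vset_subset (i : Fin n) : Vset x T p i ⊆ Ico (0:ℝ) 1 := by
  intro u hu
  rcases hu with h | h
  · have h1 := cellP_subset h
    exact ⟨h1.1, by linarith [h1.2]⟩
  · have h1 := cellM_subset h
    exact ⟨by linarith [(cellM_subset h).1], h1.2⟩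

include hx hW in
lemma exists_b : ∃ (k : ℕ) (b : Fin (k+1) → ℝ), StrictMono b ∧ b 0 = 0 ∧ b (Fin.last k) = 1 ∧
    ∀ j : Fin k, ∃ cc : ℝ, ∀ z ∈ Ico (b j.castSucc) (b j.succ),
      Smap x y σ T p z = z + cc := by
  classical
  set B : Finset ℝ := (Finset.univ.image (fun j : Fin (n+1) => Gf T p (x j) / 2)) ∪
    (Finset.univ.image (fun j : Fin (n+1) => 1 - Gf T p (x j) / 2)) with hBdef
  have h0B : (0:ℝ) ∈ B := by
    apply Finset.mem_union_left
    apply Finset.mem_image.2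
    exact ⟨0, Finset.mem_univ _, by rw [Gf_x_zero hx hW]; norm_num⟩
  have h1B : (1:ℝ) ∈ B := by
    apply Finset.mem_union_right
    apply Finset.mem_image.2
    exact ⟨0, Finset.mem_univ _, by rw [Gf_x_zero hx hW]; norm_num⟩
  have hbnd : ∀ r ∈ B, 0 ≤ r ∧ r ≤ 1 := by
    intro r hr
    rcases Finset.mem_union.1 hr with hr | hr <;> obtain ⟨j, _, rfl⟩ := Finset.mem_image.1 hr
    · have := Gf_mem (T := T) (p := p) (x j)
      constructor <;> [linarith [this.1]; linarith [this.2]]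
    · have := Gf_mem (T := T) (p := p) (x j)
      constructor <;> [linarith [this.2]; linarith [this.1]]
  have hcard : B.card ≠ 0 := Finset.card_ne_zero_of_mem h0B
  obtain ⟨k, hk⟩ : ∃ k, B.card = k + 1 := ⟨B.card - 1, (Nat.succ_pred_eq_of_pos
    (Nat.pos_of_ne_zero hcard)).symm⟩
  set e := B.orderIsoOfFin hk with he
  set b : Fin (k+1) → ℝ := fun j => (e j : ℝ) with hb
  have hbmono : StrictMono b := fun a a' h => by
    have := e.strictMono h
    exact_mod_cast this
  have hbmem : ∀ j, b j ∈ B := fun j => (e j).2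
  have hbsurj : ∀ r ∈ B, ∃ j, b j = r := by
    intro r hr
    exact ⟨e.symm ⟨r, hr⟩, by rw [hb]; simp⟩
  have hb0 : b 0 = 0 := by
    obtain ⟨j0, hj0⟩ := hbsurj 0 h0B
    have h1 : b 0 ≤ b j0 := hbmono.monotone (Fin.zero_le _)
    rw [hj0] at h1
    exact le_antisymm h1 (hbnd _ (hbmem 0)).1
  have hbl : b (Fin.last k) = 1 := by
    obtain ⟨j1, hj1⟩ := hbsurj 1 h1B
    have h1 : b j1 ≤ b (Fin.last k) := hbmono.monotone (Fin.le_last _)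
    rw [hj1] at h1
    exact le_antisymm (hbnd _ (hbmem _)).2 h1
  refine ⟨k, b, hbmono, hb0, hbl, ?_⟩
  intro j
  have hu0 : b j.castSucc ∈ Ico (0:ℝ) 1 := by
    constructor
    · rw [← hb0]; exact hbmono.monotone (Fin.zero_le _)
    · rw [← hbl]; exact hbmono (Fin.castSucc_lt_last j)
  have hnext : ∀ r ∈ B, b j.castSucc < r → b j.succ ≤ r := by
    intro r hr hlt
    obtain ⟨j', hj'⟩ := hbsurj r hr
    rw [← hj'] at hlt ⊢
    have h1 : j.castSucc < j' := by
      by_contra hcon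
      push_neg at hcon
      exact absurd hlt (not_lt.2 (hbmono.monotone hcon))
    exact hbmono.monotone (Fin.castSucc_lt_iff_succ_le.1 h1)
  rcases cell_cover hx hW hu0 with ⟨i, hi⟩ | ⟨i, hi⟩
  · refine ⟨tP x y σ T p i, ?_⟩
    intro z hz
    have hrB : Gf T p (x i.succ) / 2 ∈ B := by
      apply Finset.mem_union_left
      exact Finset.mem_image.2 ⟨i.succ, Finset.mem_univ _, rfl⟩
    have hle : b j.succ ≤ Gf T p (x i.succ) / 2 := hnext _ hrB hi.2
    exact Smap_apply_P hx ⟨le_trans hi.1 hz.1, lt_of_lt_of_le hz.2 hle⟩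
  · refine ⟨tM x y σ T p i, ?_⟩
    intro z hz
    have hrB : 1 - Gf T p (x i.castSucc) / 2 ∈ B := by
      apply Finset.mem_union_right
      exact Finset.mem_image.2 ⟨i.castSucc, Finset.mem_univ _, rfl⟩
    have hle : b j.succ ≤ 1 - Gf T p (x i.castSucc) / 2 := hnext _ hrB hi.2
    exact Smap_apply_M hx ⟨le_trans hi.1 hz.1, lt_of_lt_of_le hz.2 hle⟩

end withHyp2

end Dyn

lemma occursAt_get {A : Type*} {W : ℕ → A} {u : List A} {i : ℕ} (h : occursAt W u i)
    (j : ℕ) (hj : j < u.length) : u.get ⟨j, hj⟩ = W (i + j) := by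
  rw [List.get_eq_getElem, List.getElem_of_eq h]
  simp

lemma occursAt_of_get {A : Type*} {W : ℕ → A} {u : List A} {i : ℕ}
    (h : ∀ j (hj : j < u.length), u.get ⟨j, hj⟩ = W (i + j)) : occursAt W u i := by
  apply List.ext_get (by simp)
  intro j h1 h2
  have := h j h1
  rw [List.get_eq_getElem] at this ⊢
  rw [List.get_eq_getElem]
  simp [this]

lemma isFactor_nil {A : Type*} (W : ℕ → A) : IsFactor W [] := ⟨0, by simp [occursAt]⟩

lemma isFactor_infix {A : Type*} {W : ℕ → A} {u v : List A} (h : v <:+: u)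
    (hu : IsFactor W u) : IsFactor W v := by
  obtain ⟨s, t, hst⟩ := h
  obtain ⟨i, hi⟩ := hu
  refine ⟨i + s.length, occursAt_of_get ?_⟩
  intro j hj
  have hlen : s.length + j < u.length := by
    rw [← hst]; simp; omega
  have h1 : u[s.length + j]'hlen = W (i + (s.length + j)) := occursAt_get hi (s.length + j) hlen
  have h2 : u[s.length + j]'hlen = v[j]'hj := by
    have h3 : u[s.length + j]'hlen = (s ++ v ++ t)[s.length + j]'(hst ▸ hlen) :=
      List.getElem_of_eq hst.symm hlen
    rw [h3, List.getElem_append_left (by simp; omega), List.getElem_append_right (by omega)]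
    congr 1
    omega
  show v[j]'hj = W (i + s.length + j)
  rw [← h2, h1]
  congr 1
  omega


/-- If a uniformly recurrent word `W` is the evolution of a point, avoiding all
partition points, under a piecewise-continuous transformation of `[0,1]`, then
there is a word `W'` equivalent to `W` (same factors) generated by an interval
exchange transformation of `[0,1)` with characteristic sets that are finite
unions of intervals. -/
theorem piecewiseContinuous_word_equiv_iet_word (n : ℕ)
    (x y : Fin (n + 1) → ℝ)
    (hx : StrictMono x) (hx0 : x 0 = 0) (hx1 : x (Fin.last n) = 1)
    (hy : StrictMono y) (hy0 : y 0 = 0) (hy1 : y (Fin.last n) = 1)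
    (σ : Equiv.Perm (Fin n)) (T : ℝ → ℝ)
    (hmaps : Set.MapsTo T (Set.Icc (0 : ℝ) 1) (Set.Icc (0 : ℝ) 1))
    (hT : ∀ i : Fin n,
      Set.BijOn T (Set.Ioo (x i.castSucc) (x i.succ))
        (Set.Ioo (y (σ i).castSucc) (y (σ i).succ)) ∧
      ContinuousOn T (Set.Ioo (x i.castSucc) (x i.succ)) ∧
      (StrictMonoOn T (Set.Ioo (x i.castSucc) (x i.succ)) ∨
       StrictAntiOn T (Set.Ioo (x i.castSucc) (x i.succ))))
    (W : ℕ → Fin n) (hUR : UniformlyRecurrent W)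
    (p : ℝ) (hp : p ∈ Set.Icc (0 : ℝ) 1)
    (hW : ∀ (m : ℕ) (i : Fin n),
      W m = i ↔ T^[m] p ∈ Set.Ioo (x i.castSucc) (x i.succ)) :
    ∃ W' : ℕ → Fin n, Factors W' = Factors W ∧
      ∃ (k : ℕ) (b : Fin (k + 1) → ℝ),
        StrictMono b ∧ b 0 = 0 ∧ b (Fin.last k) = 1 ∧
        ∃ (S : ℝ → ℝ) (c : Fin k → ℝ),
          Set.BijOn S (Set.Ico (0 : ℝ) 1) (Set.Ico (0 : ℝ) 1) ∧
          (∀ i : Fin k,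
            (∀ z ∈ Set.Ico (b i.castSucc) (b i.succ), S z = z + c i) ∨
            (∀ z ∈ Set.Ico (b i.castSucc) (b i.succ), S z = c i - z)) ∧
          ∃ V : Fin n → Set ℝ,
            (∀ z ∈ Set.Ico (0 : ℝ) 1, ∃! i : Fin n, z ∈ V i) ∧
            (∀ i : Fin n, V i ⊆ Set.Ico (0 : ℝ) 1) ∧
            (∀ i : Fin n, ∃ Sf : Finset (Set ℝ),
              (∀ I ∈ Sf, Set.OrdConnected I) ∧ V i = ⋃₀ ↑Sf) ∧
            ∃ q ∈ Set.Ico (0 : ℝ) 1,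
              ∀ (m : ℕ) (i : Fin n), W' m = i ↔ S^[m] q ∈ V i := by
  classical
  have hq0 : (0:ℝ) ∈ Ico (0:ℝ) 1 := ⟨le_refl 0, zero_lt_one⟩
  have hSq : ∀ m, (Smap x y σ T p)^[m] (0:ℝ) ∈ Ico (0:ℝ) 1 := by
    intro m
    induction m with
    | zero => exact hq0
    | succ m ih =>
      rw [Function.iterate_succ_apply']
      exact Smap_mapsTo hx hy hT hW ih
  have hEU : ∀ m, ∃! i : Fin n, (Smap x y σ T p)^[m] (0:ℝ) ∈ Vset x T p i :=
    fun m => Vset_existsUnique hx hW (hSq m)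
  set W' : ℕ → Fin n := fun m => ((hEU m).exists).choose with hW'def
  have hW'spec : ∀ m, (Smap x y σ T p)^[m] (0:ℝ) ∈ Vset x T p (W' m) :=
    fun m => ((hEU m).exists).choose_spec
  have hW'iff : ∀ (m : ℕ) (i : Fin n),
      W' m = i ↔ (Smap x y σ T p)^[m] (0:ℝ) ∈ Vset x T p i := by
    intro m i
    constructor
    · rintro rfl; exact hW'spec m
    · intro h
      exact (hEU m).unique (hW'spec m) h
  have hsub : ∀ v, IsFactor W' v → IsFactor W v := by
    intro v hv
    rcases eq_or_ne v [] with rfl | hne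
    · exact isFactor_nil W
    obtain ⟨m0, hm0⟩ := hv
    have hcond : ∀ j (hj : j < v.length),
        (Smap x y σ T p)^[j] ((Smap x y σ T p)^[m0] (0:ℝ)) ∈ Vset x T p (v.get ⟨j, hj⟩) := by
      intro j hj
      have hg := occursAt_get hm0 j hj
      rw [hg, ← Function.iterate_add_apply, Nat.add_comm j m0]
      exact hW'spec (m0 + j)
    obtain ⟨α, β, hαβ, hαu, hβu, hzc, hcov⟩ :=
      key_cover hx hy hT hW v hne ((Smap x y σ T p)^[m0] (0:ℝ)) hcond
    have hex : ∃ m, orb T p m ∈ Ioo α β := by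
      rcases hcov with h | h
      · exact exists_orb_Ioo_G hαu (by linarith [h.1, h.2])
      · exact exists_orb_Ioo_H hβu (by linarith [h.1, h.2])
    obtain ⟨m, hm⟩ := hex
    refine ⟨m, occursAt_of_get ?_⟩
    intro j hj
    have hz := hzc (orb T p m) hm j hj
    have hz' : T^[m + j] p ∈ Ioo (x (v.get ⟨j, hj⟩).castSucc) (x (v.get ⟨j, hj⟩).succ) := by
      rw [Nat.add_comm m j, Function.iterate_add_apply]
      exact hz
    exact ((hW (m + j) _).2 hz').symm
  have hfac : Factors W' = Factors W := by
    apply Set.ext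
    intro u
    constructor
    · exact fun h => hsub u h
    · intro hu
      obtain ⟨N, hN⟩ := hUR u hu
      set w : List (Fin n) := (List.range N).map (fun j => W' j) with hwdef
      have hwlen : w.length = N := by simp [hwdef]
      have hwocc : occursAt W' w 0 := by
        rw [occursAt, hwlen]
        simp [hwdef]
      have hinf : u <:+: w := hN w (hsub w ⟨0, hwocc⟩) hwlen
      exact isFactor_infix hinf ⟨0, hwocc⟩
  obtain ⟨k, b, hbm, hb0, hbl, hpc⟩ := exists_b (σ := σ) (y := y) hx hW
  refine ⟨W', hfac, k, b, hbm, hb0, hbl, Smap x y σ T p, fun j => (hpc j).choose,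
    Smap_bijOn hx hy hT hW hy1 hp.2, fun j => Or.inl (hpc j).choose_spec,
    Vset x T p, fun z hz => Vset_existsUnique hx hW hz, fun i => Vset_subset i, ?_,
    0, hq0, hW'iff⟩
  intro i
  refine ⟨{cellP x T p i, cellM x T p i}, ?_, ?_⟩
  · intro I hI
    rcases Finset.mem_insert.1 hI with rfl | hI
    · exact Set.ordConnected_Ico
    · rw [Finset.mem_singleton.1 hI]
      exact Set.ordConnected_Ico
  · rw [Vset]
    simp only [Finset.coe_insert, Finset.coe_singleton, Set.sUnion_insert, Set.sUnion_singleton]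
end
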